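/- arXiv:1410.4102 — 6 statements merged into one kernel-verified Lean document; each statement's English description precedes it below -/
import Mathlib

section
/- Let Gi denote the Scorer function, Gi(z) = (1/π) · lim_{R→∞} ∫₀^R sin(zy + y³/3) dy, and for k ∈ ℕ let s_{0,2k} denote the Lommel function of even order given by the integral representation s_{0,2k}(x) = ∫₀^{π/2} cos(2kθ) · sin(x · sin θ) dθ. Then for every fixed a ∈ ℝ, lim_{k→∞} k^{1/3} · s_{0,2k}(2k − a·k^{1/3}) = −(π/2) · Gi(a). -/
open Real Filter MeasureTheory intervalIntegral

lemma abs_sub_three (x y z : ℝ) : |x - y - z| ≤ |x| + |y| + |z| := by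
  have h1 : |x - y| ≤ |x| + |y| := abs_sub x y
  have h2 : |x - y - z| ≤ |x - y| + |z| := abs_sub (x - y) z
  linarith

lemma osc_bound (g g' g'' : ℝ → ℝ) (A B m : ℝ) (hAB : A ≤ B) (hm : 0 < m)
    (hg : ∀ y ∈ Set.Icc A B, HasDerivAt g (g' y) y)
    (hg' : ∀ y ∈ Set.Icc A B, HasDerivAt g' (g'' y) y)
    (hcont : ContinuousOn g'' (Set.Icc A B))
    (hlo : ∀ y ∈ Set.Icc A B, m ≤ g' y)
    (hsign : (∀ y ∈ Set.Icc A B, 0 ≤ g'' y) ∨ (∀ y ∈ Set.Icc A B, g'' y ≤ 0)) :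
    |∫ y in A..B, Real.sin (g y)| ≤ 3 / m := by
  have huIcc : Set.uIcc A B = Set.Icc A B := Set.uIcc_of_le hAB
  have hgne : ∀ y ∈ Set.Icc A B, g' y ≠ 0 := fun y hy => ne_of_gt (lt_of_lt_of_le hm (hlo y hy))
  -- continuity
  have hcg' : ContinuousOn g' (Set.Icc A B) := fun y hy => (hg' y hy).continuousAt.continuousWithinAt
  have hcg : ContinuousOn g (Set.Icc A B) := fun y hy => (hg y hy).continuousAt.continuousWithinAt
  set u : ℝ → ℝ := fun y => (g' y)⁻¹ with hu_def
  set u' : ℝ → ℝ := fun y => -g'' y / (g' y)^2 with hu'_def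
  set v : ℝ → ℝ := fun y => -Real.cos (g y) with hv_def
  set v' : ℝ → ℝ := fun y => Real.sin (g y) * g' y with hv'_def
  have hu : ∀ y ∈ Set.uIcc A B, HasDerivAt u (u' y) y := by
    intro y hy; rw [huIcc] at hy
    exact (hg' y hy).inv (hgne y hy)
  have hv : ∀ y ∈ Set.uIcc A B, HasDerivAt v (v' y) y := by
    intro y hy; rw [huIcc] at hy
    have := ((hg y hy).cos).neg
    exact this.congr_deriv (by simp [hv'_def])
  have hu'c : ContinuousOn u' (Set.Icc A B) :=
    (hcont.neg).div (hcg'.pow 2) (fun y hy => pow_ne_zero 2 (hgne y hy))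
  have hv'c : ContinuousOn v' (Set.Icc A B) := (Real.continuous_sin.comp_continuousOn hcg).mul hcg'
  have hu'i : IntervalIntegrable u' volume A B := (hu'c.mono (by rw [huIcc])).intervalIntegrable
  have hv'i : IntervalIntegrable v' volume A B := (hv'c.mono (by rw [huIcc])).intervalIntegrable
  have ibp : ∫ y in A..B, u y * v' y = u B * v B - u A * v A - ∫ y in A..B, u' y * v y :=
    intervalIntegral.integral_mul_deriv_eq_deriv_mul hu hv hu'i hv'i
  have heq : ∫ y in A..B, Real.sin (g y) = ∫ y in A..B, u y * v' y := by
    apply intervalIntegral.integral_congr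
    intro y hy
    rw [huIcc] at hy
    simp only [hu_def, hv'_def]
    field_simp [hgne y hy]
  have hup : ∀ y ∈ Set.Icc A B, 0 < u y := by
    intro y hy
    have h1 : 0 < g' y := lt_of_lt_of_le hm (hlo y hy)
    positivity
  have hub : ∀ y ∈ Set.Icc A B, u y ≤ 1/m := by
    intro y hy
    have h1 : 0 < g' y := lt_of_lt_of_le hm (hlo y hy)
    rw [one_div]
    exact inv_anti₀ hm (hlo y hy)
  have hvb : ∀ y, |v y| ≤ 1 := by
    intro y; simp only [hv_def, abs_neg]; exact Real.abs_cos_le_one _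
  have hvc : ContinuousOn v (Set.Icc A B) :=
    (Real.continuous_cos.comp_continuousOn hcg).neg
  have hAmem : A ∈ Set.Icc A B := ⟨le_refl _, hAB⟩
  have hBmem : B ∈ Set.Icc A B := ⟨hAB, le_refl _⟩
  have hftc : ∫ y in A..B, u' y = u B - u A :=
    intervalIntegral.integral_eq_sub_of_hasDerivAt hu hu'i
  have hIabs : ∫ y in A..B, |u' y| ≤ 1/m := by
    rcases hsign with hpos | hneg
    · have hueq : Set.EqOn (fun y => |u' y|) (fun y => -(u' y)) (Set.Icc A B) := by
        intro y hy
        have : u' y ≤ 0 := by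
          have h1 : 0 < g' y := lt_of_lt_of_le hm (hlo y hy)
          have h2 := hpos y hy
          simp only [hu'_def]
          apply div_nonpos_of_nonpos_of_nonneg (by linarith) (by positivity)
        simp [abs_of_nonpos this]
      calc ∫ y in A..B, |u' y| = ∫ y in A..B, -(u' y) := by
            apply intervalIntegral.integral_congr; rwa [huIcc]
        _ = -(u B - u A) := by rw [intervalIntegral.integral_neg, hftc]
        _ ≤ 1/m := by
            have := hup B hBmem; have := hub A hAmem; linarith
    · have hueq : Set.EqOn (fun y => |u' y|) u' (Set.Icc A B) := by
        intro y hy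
        have : 0 ≤ u' y := by
          have h1 : 0 < g' y := lt_of_lt_of_le hm (hlo y hy)
          have h2 := hneg y hy
          simp only [hu'_def]
          apply div_nonneg (by linarith) (by positivity)
        simp [abs_of_nonneg this]
      calc ∫ y in A..B, |u' y| = ∫ y in A..B, u' y := by
            apply intervalIntegral.integral_congr; rwa [huIcc]
        _ = u B - u A := hftc
        _ ≤ 1/m := by
            have := hup A hAmem; have := hub B hBmem; linarith
  have hIuv : |∫ y in A..B, u' y * v y| ≤ 1/m := by
    have habs : |∫ y in A..B, u' y * v y| ≤ ∫ y in A..B, |u' y * v y| :=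
      intervalIntegral.abs_integral_le_integral_abs hAB
    have h1 : ∫ y in A..B, |u' y * v y| ≤ ∫ y in A..B, |u' y| := by
      apply intervalIntegral.integral_mono_on hAB
      · exact (((hu'c.mul hvc).abs).mono (by rw [huIcc])).intervalIntegrable
      · exact ((hu'c.abs).mono (by rw [huIcc])).intervalIntegrable
      · intro y hy
        rw [abs_mul]
        have h2 := hvb y
        nlinarith [abs_nonneg (u' y)]
    linarith
  rw [heq, ibp]
  have h1 : |u B * v B| ≤ 1/m := by
    rw [abs_mul, abs_of_pos (hup B hBmem)]
    have := hub B hBmem; have := hup B hBmem; have := hvb B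
    nlinarith [abs_nonneg (v B)]
  have h2 : |u A * v A| ≤ 1/m := by
    rw [abs_mul, abs_of_pos (hup A hAmem)]
    have := hub A hAmem; have := hup A hAmem; have := hvb A
    nlinarith [abs_nonneg (v A)]
  have h3 := abs_sub_three (u B * v B) (u A * v A) (∫ y in A..B, u' y * v y)
  have : (3:ℝ)/m = 1/m + 1/m + 1/m := by ring
  rw [this]
  linarith

lemma sin_lip (x y : ℝ) : |Real.sin x - Real.sin y| ≤ |x - y| := by
  rw [Real.sin_sub_sin]
  have h1 : |Real.sin ((x - y)/2)| ≤ |(x - y)/2| := Real.abs_sin_le_abs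
  have h2 : |Real.cos ((x + y)/2)| ≤ 1 := Real.abs_cos_le_one _
  calc |2 * Real.sin ((x-y)/2) * Real.cos ((x+y)/2)|
      = 2 * |Real.sin ((x-y)/2)| * |Real.cos ((x+y)/2)| := by
        rw [abs_mul, abs_mul]; norm_num
    _ ≤ 2 * |(x-y)/2| * 1 := by
        apply mul_le_mul _ h2 (abs_nonneg _) (by positivity)
        have := mul_le_mul_of_nonneg_left h1 (by norm_num : (0:ℝ) ≤ 2)
        linarith
    _ = |x - y| := by rw [abs_div, abs_two]; ring

lemma one_sub_cos_lb {θ : ℝ} (h0 : 0 ≤ θ) (h1 : θ ≤ π/2) :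
    2/π^2 * θ^2 ≤ 1 - Real.cos θ := by
  have hs : Real.cos θ = 1 - 2 * Real.sin (θ/2)^2 := by
    have := Real.cos_two_mul' (θ/2)
    have hsq := Real.sin_sq_add_cos_sq (θ/2)
    rw [show 2 * (θ/2) = θ by ring] at this
    nlinarith
  have hθ2 : θ/2 ≤ π/2 := by have := Real.pi_pos; linarith
  have hlb : 2/π * (θ/2) ≤ Real.sin (θ/2) := Real.mul_le_sin (by linarith) hθ2
  have hpos : 0 < π := Real.pi_pos
  have h2 : (2/π * (θ/2))^2 ≤ Real.sin (θ/2)^2 := by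
    apply pow_le_pow_left₀ (by positivity) hlb
  have : (2/π * (θ/2))^2 = θ^2/π^2 := by field_simp
  rw [hs]
  rw [this] at h2
  have : 2/π^2 * θ^2 = 2 * (θ^2/π^2) := by ring
  linarith [h2]

lemma HD1 (c x t : ℝ) : HasDerivAt (fun s : ℝ => c * s + x * Real.sin s) (c + x * Real.cos t) t := by
  exact (((hasDerivAt_id t).const_mul c).add ((Real.hasDerivAt_sin t).const_mul x)).congr_deriv (by ring)

lemma HD2 (c x t : ℝ) : HasDerivAt (fun s : ℝ => c + x * Real.cos s) (-(x * Real.sin t)) t := by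
  have := (hasDerivAt_const t c).add ((Real.hasDerivAt_cos t).const_mul x)
  exact this.congr_deriv (by ring)

lemma HD3 (c x t : ℝ) : HasDerivAt (fun s : ℝ => c * s - x * Real.sin s) (c - x * Real.cos t) t := by
  have := (((hasDerivAt_id t).const_mul c)).sub ((Real.hasDerivAt_sin t).const_mul x)
  exact this.congr_deriv (by ring)

lemma HD4 (c x t : ℝ) : HasDerivAt (fun s : ℝ => c - x * Real.cos s) (x * Real.sin t) t := by
  have := (hasDerivAt_const t c).sub ((Real.hasDerivAt_cos t).const_mul x)
  exact this.congr_deriv (by ring)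

set_option maxHeartbeats 2000000 in

/-- If `Gi` is the Scorer function (defined by the improper oscillatory
integral) and `s k` is the Lommel function `s_{0,2k}` (defined by its integral
representation), then for every fixed `a : ℝ`,
`k^(1/3) * s_{0,2k}(2k - a k^(1/3)) → -(π/2) * Gi a` as `k → ∞`. -/
theorem lommel_scorer_limit
    (Gi : ℝ → ℝ)
    (hGi : ∀ z : ℝ, Tendsto (fun R : ℝ => ∫ y in (0:ℝ)..R, Real.sin (z * y + y ^ 3 / 3))
      atTop (nhds (π * Gi z)))
    (s : ℕ → ℝ → ℝ)
    (hs : ∀ (k : ℕ) (x : ℝ),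
      s k x = ∫ θ in (0:ℝ)..(π / 2), Real.cos (2 * (k : ℝ) * θ) * Real.sin (x * Real.sin θ))
    (a : ℝ) :
    Tendsto (fun k : ℕ =>
        (k : ℝ) ^ ((1:ℝ)/3) * s k (2 * (k : ℝ) - a * (k : ℝ) ^ ((1:ℝ)/3)))
      atTop (nhds (-(π / 2) * Gi a)) := by
  have hπ : 0 < π := Real.pi_pos
  have hπ3 : 3 < π := Real.pi_gt_three
  rw [Metric.tendsto_atTop]
  intro ε hε
  -- choose T
  have hE1 : ∀ᶠ R in atTop,
      dist (∫ y in (0:ℝ)..R, Real.sin (a * y + y ^ 3 / 3)) (π * Gi a) < ε/5 :=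
    Metric.tendsto_nhds.mp (hGi a) (ε/5) (by positivity)
  have hE2 : ∀ᶠ R : ℝ in atTop, 15/ε + |a| + 1 ≤ 4/π^2 * R^2 := by
    have hT : Tendsto (fun R : ℝ => 4/π^2 * R^2) atTop atTop :=
      (tendsto_pow_atTop (two_ne_zero)).const_mul_atTop (by positivity)
    exact hT.eventually_ge_atTop _
  have hE3 : ∀ᶠ R : ℝ in atTop, (1:ℝ) ≤ R := eventually_ge_atTop 1
  obtain ⟨T, hT1, hT2, hT3⟩ := (hE1.and (hE2.and hE3)).exists
  set m : ℝ := 4/π^2 * T^2 - |a| with hm_def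
  have hm15 : 15/ε ≤ m := by simp only [hm_def]; linarith
  have hmpos : 0 < m := lt_of_lt_of_le (by positivity) hm15
  have hTpos : (0:ℝ) < T := lt_of_lt_of_le one_pos hT3
  set D : ℝ := 5/32 * T^4 + |a| * T^3 / 6 with hD_def
  have hDpos : 0 < D := by have : 0 < T^4 := by positivity
                           have : 0 ≤ |a| * T^3 := by positivity
                           simp only [hD_def]; nlinarith
  set P : ℝ := max (max 1 T) (max |a| (max (15/(4*ε)) (5*T*D/(2*ε)))) with hP_def
  have hpk : Tendsto (fun k : ℕ => (k : ℝ) ^ ((1:ℝ)/3)) atTop atTop :=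
    (tendsto_rpow_atTop (by norm_num)).comp tendsto_natCast_atTop_atTop
  obtain ⟨N, hN⟩ := (hpk.eventually_ge_atTop P).exists_forall_of_atTop
  refine ⟨N, fun k hk => ?_⟩
  set p : ℝ := (k : ℝ) ^ ((1:ℝ)/3) with hp_def
  have hPp : P ≤ p := hN k hk
  have hp1 : (1:ℝ) ≤ p := le_trans (le_trans (le_max_left 1 T) (le_max_left _ _)) hPp
  have hpT : T ≤ p := le_trans (le_trans (le_max_right 1 T) (le_max_left _ _)) hPp
  have hpa : |a| ≤ p := le_trans (le_trans (le_max_left |a| _) (le_max_right _ _)) hPp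
  have hpe1 : 15/(4*ε) ≤ p :=
    le_trans (le_trans (le_trans (le_max_left _ _) (le_max_right |a| _)) (le_max_right _ _)) hPp
  have hpe2 : 5*T*D/(2*ε) ≤ p :=
    le_trans (le_trans (le_trans (le_max_right _ _) (le_max_right |a| _)) (le_max_right _ _)) hPp
  have hppos : 0 < p := lt_of_lt_of_le one_pos hp1
  have hp3 : p^3 = (k:ℝ) := by
    rw [hp_def, ← Real.rpow_natCast ((k:ℝ) ^ ((1:ℝ)/3)) 3, ← Real.rpow_mul (Nat.cast_nonneg k)]
    norm_num
  have hpe1' : 15 ≤ 4*ε*p := by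
    rw [div_le_iff₀ (by positivity)] at hpe1; linarith
  have hpe2' : 5*T*D ≤ 2*ε*p := by
    rw [div_le_iff₀ (by positivity)] at hpe2; linarith
  have hm15' : 15 ≤ ε*m := by
    rw [div_le_iff₀ hε] at hm15; linarith
  have hpp2 : p ≤ p^2 := by nlinarith
  set x : ℝ := 2*(k:ℝ) - a * p with hx_def
  have hx : x = 2*p^3 - a*p := by rw [hx_def, hp3]
  have hcube : p*p ≤ p^3 := by
    nlinarith [mul_nonneg (mul_nonneg hppos.le hppos.le) (sub_nonneg.mpr hp1)]
  have hxlb : p^3 ≤ x := by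
    rw [hx]
    have h1 : a ≤ p := le_trans (le_abs_self a) hpa
    have h2 : a*p ≤ p*p := mul_le_mul_of_nonneg_right h1 hppos.le
    linarith
  have hxub : x ≤ 3*p^3 := by
    rw [hx]
    have h1 : -p ≤ a := by linarith [neg_abs_le a]
    have h2 : -p*p ≤ a*p := mul_le_mul_of_nonneg_right h1 hppos.le
    linarith
  have hxpos : 0 < x := lt_of_lt_of_le (by positivity) hxlb
  have hTp2 : T/p ≤ 1 := by rw [div_le_one hppos]; exact hpT
  have hTppos : 0 ≤ T/p := by positivity
  have hTpπ : T/p ≤ π/2 := by linarith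
  -- the two phase integrands
  set F : ℝ → ℝ := fun θ => Real.sin (2*(k:ℝ)*θ + x*Real.sin θ) with hF_def
  set G : ℝ → ℝ := fun θ => Real.sin (2*(k:ℝ)*θ - x*Real.sin θ) with hG_def
  have hFc : Continuous F :=
    Real.continuous_sin.comp
      (((continuous_const.mul continuous_id).add (continuous_const.mul Real.continuous_sin)))
  have hGc : Continuous G :=
    Real.continuous_sin.comp
      (((continuous_const.mul continuous_id).sub (continuous_const.mul Real.continuous_sin)))
  set IF : ℝ := ∫ θ in (0:ℝ)..(π/2), F θ with hIF_def
  set J1 : ℝ := ∫ θ in (0:ℝ)..(T/p), G θ with hJ1_def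
  set J2 : ℝ := ∫ θ in (T/p)..(π/2), G θ with hJ2_def
  set IG : ℝ := ∫ y in (0:ℝ)..T, G (y * p⁻¹) with hIG_def
  set Ih : ℝ := ∫ y in (0:ℝ)..T, Real.sin (a * y + y ^ 3 / 3) with hIh_def
  have id1 : (∫ θ in (0:ℝ)..(π/2), Real.cos (2*(k:ℝ)*θ) * Real.sin (x*Real.sin θ))
      = (IF - (∫ θ in (0:ℝ)..(π/2), G θ))/2 := by
    have hpt : ∀ θ ∈ Set.uIcc (0:ℝ) (π/2),
        Real.cos (2*(k:ℝ)*θ) * Real.sin (x*Real.sin θ) = (F θ - G θ)/2 := by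
      intro θ _
      simp only [hF_def, hG_def]
      rw [Real.sin_add, Real.sin_sub]
      ring
    rw [intervalIntegral.integral_congr hpt, hIF_def]
    rw [intervalIntegral.integral_div,
      intervalIntegral.integral_sub (hFc.intervalIntegrable _ _) (hGc.intervalIntegrable _ _)]
  have id2 : J1 + J2 = ∫ θ in (0:ℝ)..(π/2), G θ :=
    intervalIntegral.integral_add_adjacent_intervals
      (hGc.intervalIntegrable _ _) (hGc.intervalIntegrable _ _)
  have id3 : IG = p * J1 := by
    have hsubst := intervalIntegral.integral_comp_mul_right (a := (0:ℝ)) (b := T)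
      (fun θ => G θ) (inv_ne_zero (ne_of_gt hppos))
    rw [hIG_def, hJ1_def, hsubst]
    rw [zero_mul, inv_inv, smul_eq_mul, div_eq_mul_inv]
  -- bound t1
  have ht1 : |p * IF / 2| ≤ ε/5 := by
    have hosc : |IF| ≤ 3 / (2*(k:ℝ)) := by
      apply osc_bound (fun θ => 2*(k:ℝ)*θ + x*Real.sin θ)
        (fun θ => 2*(k:ℝ) + x*Real.cos θ) (fun θ => -(x*Real.sin θ))
        0 (π/2) (2*(k:ℝ)) (by linarith) (by rw [← hp3]; positivity)
        (fun θ _ => HD1 _ _ _) (fun θ _ => HD2 _ _ _) (by fun_prop)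
      · intro θ hθ
        have hcos : 0 ≤ Real.cos θ :=
          Real.cos_nonneg_of_mem_Icc ⟨by linarith [hθ.1], hθ.2⟩
        have h5 := mul_nonneg hxpos.le hcos
        linarith only [h5]
      · right
        intro θ hθ
        have hsin : 0 ≤ Real.sin θ :=
          Real.sin_nonneg_of_nonneg_of_le_pi hθ.1 (by linarith [hθ.2])
        exact neg_nonpos.mpr (mul_nonneg hxpos.le hsin)
    have hval : |p * IF / 2| = p * |IF| / 2 := by
      rw [abs_div, abs_mul, abs_of_pos hppos, abs_two]
    rw [hval]
    have h2 : p * |IF| / 2 ≤ p * (3/(2*p^3)) / 2 := by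
      rw [← hp3] at hosc
      have h5 := mul_le_mul_of_nonneg_left hosc (le_of_lt hppos)
      linarith only [h5]
    have h3 : p * (3/(2*p^3)) / 2 = 3/(4*p^2) := by
      field_simp; ring
    have h4 : 3/(4*p^2) ≤ ε/5 := by
      rw [div_le_div_iff₀ (by positivity) (by norm_num)]
      have h5 := mul_le_mul_of_nonneg_left hpp2 (by positivity : (0:ℝ) ≤ 4*ε)
      linarith only [h5, hpe1']
    linarith only [h2, h3, h4]
  -- bound t3
  have ht3 : |p * J2 / 2| ≤ ε/5 := by
    have hosc : |J2| ≤ 3 / (p * m) := by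
      apply osc_bound (fun θ => 2*(k:ℝ)*θ - x*Real.sin θ)
        (fun θ => 2*(k:ℝ) - x*Real.cos θ) (fun θ => x*Real.sin θ)
        (T/p) (π/2) (p*m) hTpπ (by positivity)
        (fun θ _ => HD3 _ _ _) (fun θ _ => HD4 _ _ _) (by fun_prop)
      · intro θ hθ
        have hθ0 : 0 ≤ θ := le_trans hTppos hθ.1
        have hcos0 : 0 ≤ Real.cos θ :=
          Real.cos_nonneg_of_mem_Icc ⟨by linarith, hθ.2⟩
        have hcos1 : Real.cos θ ≤ 1 := Real.cos_le_one θ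
        have hlb := one_sub_cos_lb hθ0 hθ.2
        have hsq : (T/p)^2 ≤ θ^2 := pow_le_pow_left₀ hTppos hθ.1 2
        have h1 : 2*p^3*(2/π^2*(T/p)^2) ≤ 2*p^3*(1 - Real.cos θ) := by
          apply mul_le_mul_of_nonneg_left _ (by positivity)
          calc 2/π^2*(T/p)^2 ≤ 2/π^2*θ^2 := by
                apply mul_le_mul_of_nonneg_left hsq (by positivity)
            _ ≤ 1 - Real.cos θ := hlb
        have h2 : 2*p^3*(2/π^2*(T/p)^2) = p*(4/π^2*T^2) := by
          field_simp; ring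
        have h3 : -|a| * p ≤ a*p*Real.cos θ := by
          have hA1 : 0 ≤ (a + |a|) * Real.cos θ :=
            mul_nonneg (by linarith only [neg_abs_le a]) hcos0
          have hA2 : 0 ≤ |a| * (1 - Real.cos θ) :=
            mul_nonneg (abs_nonneg a) (by linarith only [hcos1])
          have haco : -|a| ≤ a * Real.cos θ := by nlinarith only [hA1, hA2]
          have h5 := mul_le_mul_of_nonneg_right haco hppos.le
          nlinarith only [h5]
        have h4 : 2*(k:ℝ) - x*Real.cos θ = 2*p^3*(1-Real.cos θ) + a*p*Real.cos θ := by
          rw [← hp3, hx]; ring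
        rw [h4, hm_def]
        nlinarith only [h1, h2, h3]
      · left
        intro θ hθ
        have hθ0 : 0 ≤ θ := le_trans hTppos hθ.1
        have hsin : 0 ≤ Real.sin θ :=
          Real.sin_nonneg_of_nonneg_of_le_pi hθ0 (by linarith [hθ.2])
        exact mul_nonneg hxpos.le hsin
    have hval : |p * J2 / 2| = p * |J2| / 2 := by
      rw [abs_div, abs_mul, abs_of_pos hppos, abs_two]
    rw [hval]
    have h2 : p * |J2| / 2 ≤ p * (3/(p*m)) / 2 := by
      have h5 := mul_le_mul_of_nonneg_left hosc (le_of_lt hppos)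
      linarith only [h5]
    have h3 : p * (3/(p*m)) / 2 = 3/(2*m) := by
      field_simp
    have h4 : 3/(2*m) ≤ ε/5 := by
      rw [div_le_div_iff₀ (by positivity) (by norm_num)]
      linarith only [hm15']
    linarith only [h2, h3, h4]
  -- bound t2
  have ht2 : |IG - Ih| ≤ D*T/p := by
    have hint1 : IntervalIntegrable (fun y : ℝ => G (y * p⁻¹)) volume 0 T :=
      (hGc.comp (by fun_prop)).intervalIntegrable _ _
    have hint2 : IntervalIntegrable (fun y : ℝ => Real.sin (a * y + y ^ 3 / 3)) volume 0 T :=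
      (Continuous.intervalIntegrable (by fun_prop)) _ _
    have hsub : IG - Ih = ∫ y in (0:ℝ)..T,
        (G (y * p⁻¹) - Real.sin (a * y + y ^ 3 / 3)) := by
      rw [hIG_def, hIh_def, intervalIntegral.integral_sub hint1 hint2]
    rw [hsub]
    have hbd : ∀ y ∈ Set.uIoc (0:ℝ) T,
        ‖G (y * p⁻¹) - Real.sin (a * y + y ^ 3 / 3)‖ ≤ D/p := by
      intro y hy
      rw [Set.uIoc_of_le (le_of_lt hTpos)] at hy
      have hy0 : 0 < y := hy.1
      have hyT : y ≤ T := hy.2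
      have hu0 : 0 ≤ y * p⁻¹ := by positivity
      have huT : y * p⁻¹ ≤ T/p := by
        rw [div_eq_mul_inv]
        apply mul_le_mul_of_nonneg_right hyT (by positivity)
      have hu1 : y * p⁻¹ ≤ 1 := le_trans huT hTp2
      have habs_u : |y * p⁻¹| ≤ 1 := by rw [abs_of_nonneg hu0]; exact hu1
      have hsinb := Real.sin_bound habs_u
      have hlip : ‖G (y * p⁻¹) - Real.sin (a * y + y ^ 3 / 3)‖ ≤
          |(2*(k:ℝ)*(y*p⁻¹) - x*Real.sin (y*p⁻¹)) - (a * y + y ^ 3 / 3)| := by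
        rw [Real.norm_eq_abs]
        simp only [hG_def]
        exact sin_lip _ _
      have halg : (2*(k:ℝ)*(y*p⁻¹) - x*Real.sin (y*p⁻¹)) - (a * y + y ^ 3 / 3)
          = x*((y*p⁻¹ - (y*p⁻¹)^3/6) - Real.sin (y*p⁻¹)) - a*y^3/(6*p^2) := by
        rw [← hp3, hx]
        field_simp
        ring
      have htri : |(2*(k:ℝ)*(y*p⁻¹) - x*Real.sin (y*p⁻¹)) - (a * y + y ^ 3 / 3)|
          ≤ |x| * |Real.sin (y*p⁻¹) - (y*p⁻¹ - (y*p⁻¹)^3/6)| + |a * y^3 / (6*p^2)| := by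
        rw [halg]
        refine le_trans (abs_sub _ _) ?_
        rw [abs_mul, abs_sub_comm (Real.sin (y*p⁻¹))]
      have hb1 : |x| * |Real.sin (y*p⁻¹) - (y*p⁻¹ - (y*p⁻¹)^3/6)| ≤ 5/32*T^4/p := by
        have hx3 : |x| ≤ 3*p^3 := by rw [abs_of_pos hxpos]; exact hxub
        have hupow : |y*p⁻¹|^4 ≤ (T/p)^4 := by
          apply pow_le_pow_left₀ (abs_nonneg _) _ 4
          rw [abs_of_nonneg hu0]; exact huT
        have hstep : |x| * |Real.sin (y*p⁻¹) - (y*p⁻¹ - (y*p⁻¹)^3/6)|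
            ≤ (3*p^3) * ((T/p)^4 * (5/96)) := by
          apply mul_le_mul hx3 _ (abs_nonneg _) (by positivity)
          refine le_trans hsinb ?_
          have h5 : |y*p⁻¹|^5 ≤ |y*p⁻¹|^4 := pow_le_pow_of_le_one (abs_nonneg _) habs_u (by norm_num)
          linarith [pow_nonneg hTppos 4]
        have heq2 : (3*p^3) * ((T/p)^4 * (5/96)) = 5/32*T^4/p := by
          field_simp; ring
        linarith only [hstep, heq2]
      have hb2 : |a * y^3 / (6*p^2)| ≤ |a| * T^3/(6*p) := by
        rw [abs_div, abs_mul]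
        have h6p : |(6:ℝ)*p^2| = 6*p^2 := by
          rw [abs_of_pos (by positivity)]
        rw [h6p]
        have hy3 : |y^3| ≤ T^3 := by
          rw [abs_of_nonneg (by positivity)]
          exact pow_le_pow_left₀ (le_of_lt hy0) hyT 3
        apply div_le_div₀ (by positivity) _ (by positivity) _
        · apply mul_le_mul_of_nonneg_left hy3 (abs_nonneg a)
        · linarith only [hpp2]
      have hDp : 5/32*T^4/p + |a| * T^3/(6*p) = D/p := by
        rw [hD_def]; field_simp
      calc ‖G (y * p⁻¹) - Real.sin (a * y + y ^ 3 / 3)‖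
          ≤ |x| * |Real.sin (y*p⁻¹) - (y*p⁻¹ - (y*p⁻¹)^3/6)| + |a * y^3 / (6*p^2)| :=
            le_trans hlip htri
        _ ≤ 5/32*T^4/p + |a| * T^3/(6*p) := add_le_add hb1 hb2
        _ = D/p := hDp
    have := intervalIntegral.norm_integral_le_of_norm_le_const hbd
    rw [Real.norm_eq_abs] at this
    refine le_trans this (le_of_eq ?_)
    rw [sub_zero, abs_of_pos hTpos]
    ring
  have ht2' : |(IG - Ih)/2| ≤ ε/5 := by
    rw [abs_div, abs_two]
    have h1 : D*T/p / 2 ≤ ε/5 := by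
      rw [div_div, div_le_div_iff₀ (by positivity) (by norm_num)]
      linarith only [hpe2']
    have h2 : |IG - Ih| / 2 ≤ D*T/p/2 := by linarith only [ht2]
    linarith only [h1, h2]
  -- bound t4
  have ht4 : |(Ih - π * Gi a)/2| < ε/5 := by
    rw [Real.dist_eq] at hT1
    rw [abs_div, abs_two]
    have h5 : |Ih - π * Gi a| < ε/5 := hT1
    linarith only [h5, abs_nonneg (Ih - π * Gi a)]
  -- assemble
  rw [hs k x, Real.dist_eq, id1]
  have keyeq : p * ((IF - (∫ θ in (0:ℝ)..(π/2), G θ))/2) - (-(π/2) * Gi a)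
      = p * IF / 2 - (IG - Ih)/2 - p * J2 / 2 - (Ih - π * Gi a)/2 := by
    rw [← id2]
    linear_combination ((1:ℝ)/2) * id3
  rw [keyeq]
  have hfin1 : |p * IF / 2 - (IG - Ih)/2 - p * J2 / 2 - (Ih - π * Gi a)/2|
      ≤ |p * IF / 2 - (IG - Ih)/2 - p * J2 / 2| + |(Ih - π * Gi a)/2| :=
    abs_sub _ _
  have hfin2 : |p * IF / 2 - (IG - Ih)/2 - p * J2 / 2|
      ≤ |p * IF / 2| + |(IG - Ih)/2| + |p * J2 / 2| :=
    abs_sub_three _ _ _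
  calc |p * IF / 2 - (IG - Ih)/2 - p * J2 / 2 - (Ih - π * Gi a)/2|
      ≤ |p * IF / 2| + |(IG - Ih)/2| + |p * J2 / 2| + |(Ih - π * Gi a)/2| := by
        linarith only [hfin1, hfin2]
    _ < ε := by linarith only [ht1, ht2', ht3, ht4, hε]
end

section
/- Let Ai denote the Airy function, Ai(z) = (1/π) · lim_{R→∞} ∫₀^R cos(zy + y³/3) dy, and for n ∈ ℕ let J_n denote the Bessel function of the first kind given by Bessel's integral J_n(x) = (1/π) ∫₀^π cos(nθ − x · sin θ) dθ. Then for every fixed a ∈ ℝ, lim_{n→∞} (n/2)^{1/3} · J_n(n − a·(n/2)^{1/3}) = Ai(a). -/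
open Real Filter MeasureTheory intervalIntegral

section AuxLemmas

lemma vdc (φ p q : ℝ → ℝ) (α β lam : ℝ) (hab : α ≤ β) (hlam : 0 < lam)
    (hd1 : ∀ y, HasDerivAt φ (p y) y)
    (hd2 : ∀ y, HasDerivAt p (q y) y)
    (hqc : Continuous q)
    (hq : ∀ y ∈ Set.Icc α β, 0 ≤ q y)
    (hp : ∀ y ∈ Set.Icc α β, lam ≤ p y) :
    |∫ y in α..β, Real.cos (φ y)| ≤ 3 / lam := by
  have hIcc : Set.uIcc α β = Set.Icc α β := Set.uIcc_of_le hab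
  have hpc : Continuous p := continuous_iff_continuousAt.mpr fun y => (hd2 y).continuousAt
  have hφc : Continuous φ := continuous_iff_continuousAt.mpr fun y => (hd1 y).continuousAt
  have hppos : ∀ y ∈ Set.Icc α β, 0 < p y := fun y hy => hlam.trans_le (hp y hy)
  have hpne : ∀ y ∈ Set.Icc α β, p y ≠ 0 := fun y hy => (hppos y hy).ne'
  set u : ℝ → ℝ := fun y => (p y)⁻¹ with hu
  set u' : ℝ → ℝ := fun y => -(q y) / (p y) ^ 2 with hu'
  set v : ℝ → ℝ := fun y => Real.sin (φ y) with hv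
  set v' : ℝ → ℝ := fun y => Real.cos (φ y) * p y with hv'
  have hdu : ∀ y ∈ Set.Icc α β, HasDerivAt u (u' y) y := fun y hy => (hd2 y).inv (hpne y hy)
  have hdv : ∀ y, HasDerivAt v (v' y) y := fun y => (hd1 y).sin
  have hucont : ContinuousOn u (Set.uIcc α β) := by
    rw [hIcc]; exact hpc.continuousOn.inv₀ hpne
  have hu'cont : ContinuousOn u' (Set.uIcc α β) := by
    rw [hIcc]
    exact (hqc.neg.continuousOn).div ((hpc.pow 2).continuousOn)
      (fun y hy => pow_ne_zero 2 (hpne y hy))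
  have hu'int : IntervalIntegrable u' volume α β := hu'cont.intervalIntegrable
  have hv'int : IntervalIntegrable v' volume α β :=
    (( (Real.continuous_cos.comp hφc).mul hpc)).continuousOn.intervalIntegrable
  have heq : ∫ y in α..β, Real.cos (φ y) = ∫ y in α..β, u y * v' y := by
    apply intervalIntegral.integral_congr
    intro y hy
    rw [hIcc] at hy
    simp only [hu, hv']
    rw [mul_comm (Real.cos (φ y)) (p y), ← mul_assoc, inv_mul_cancel₀ (hpne y hy), one_mul]
  have ibp : ∫ y in α..β, u y * v' y
      = u β * v β - u α * v α - ∫ y in α..β, u' y * v y := by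
    apply intervalIntegral.integral_mul_deriv_eq_deriv_mul_of_hasDerivAt
      hucont ( (Real.continuous_sin.comp hφc).continuousOn)
      (fun y hy => hdu y (by
        rw [min_eq_left hab, max_eq_right hab] at hy
        exact Set.mem_Icc.mpr ⟨hy.1.le, hy.2.le⟩))
      (fun y _ => hdv y) hu'int hv'int
  have hαm : α ∈ Set.Icc α β := ⟨le_refl _, hab⟩
  have hβm : β ∈ Set.Icc α β := ⟨hab, le_refl _⟩
  have hule : ∀ y ∈ Set.Icc α β, u y ≤ 1 / lam := by
    intro y hy
    rw [hu, one_div]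
    exact inv_anti₀ hlam (hp y hy)
  have hupos : ∀ y ∈ Set.Icc α β, 0 < u y := fun y hy => inv_pos.mpr (hppos y hy)
  have huble : ∀ y ∈ Set.Icc α β, |u y| ≤ 1 / lam := fun y hy => by
    rw [abs_of_pos (hupos y hy)]; exact hule y hy
  have b1 : |u β * v β| ≤ 1 / lam := by
    rw [abs_mul]
    calc |u β| * |v β| ≤ (1/lam) * 1 :=
          mul_le_mul (huble β hβm) (Real.abs_sin_le_one _) (abs_nonneg _) (by positivity)
      _ = 1/lam := by ring
  have b2 : |u α * v α| ≤ 1 / lam := by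
    rw [abs_mul]
    calc |u α| * |v α| ≤ (1/lam) * 1 :=
          mul_le_mul (huble α hαm) (Real.abs_sin_le_one _) (abs_nonneg _) (by positivity)
      _ = 1/lam := by ring
  have hftc : ∫ y in α..β, (q y / (p y) ^ 2) = u α - u β := by
    have : ∫ y in α..β, (q y / (p y) ^ 2) = (-(u β)) - (-(u α)) := by
      apply intervalIntegral.integral_eq_sub_of_hasDerivAt
      · intro y hy
        rw [hIcc] at hy
        have h1 := (hdu y hy).neg
        refine h1.congr_deriv ?_
        simp only [hu']
        ring
      · apply ContinuousOn.intervalIntegrable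
        rw [hIcc]
        exact (hqc.continuousOn.div ((hpc.pow 2).continuousOn)
          (fun y hy => pow_ne_zero 2 (hpne y hy)))
    rw [this]; ring
  have b3 : |∫ y in α..β, u' y * v y| ≤ 1 / lam := by
    have step1 : |∫ y in α..β, u' y * v y| ≤ ∫ y in α..β, |u' y * v y| :=
      intervalIntegral.abs_integral_le_integral_abs hab
    have step2 : ∫ y in α..β, |u' y * v y| ≤ ∫ y in α..β, (q y / (p y) ^ 2) := by
      apply intervalIntegral.integral_mono_on hab
      · exact ((hu'cont.mul  (Real.continuous_sin.comp hφc).continuousOn).abs).intervalIntegrable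
      · apply ContinuousOn.intervalIntegrable
        rw [hIcc]
        exact hqc.continuousOn.div ((hpc.pow 2).continuousOn)
          (fun y hy => pow_ne_zero 2 (hpne y hy))
      · intro y hy
        rw [abs_mul]
        have h1 : |u' y| = q y / (p y) ^ 2 := by
          rw [hu', abs_div, abs_neg, abs_of_nonneg (hq y hy), abs_of_pos
            (pow_pos (hppos y hy) 2)]
        rw [h1]
        calc q y / (p y) ^ 2 * |v y| ≤ q y / (p y) ^ 2 * 1 :=
              mul_le_mul_of_nonneg_left (Real.abs_sin_le_one _)
                (div_nonneg (hq y hy) (sq_nonneg _))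
          _ = q y / (p y) ^ 2 := by ring
    have step3 : u α - u β ≤ 1 / lam := by
      have := hule α hαm
      have := hupos β hβm
      linarith
    linarith [step1, step2.trans_eq hftc]
  rw [heq, ibp]
  calc |u β * v β - u α * v α - ∫ y in α..β, u' y * v y|
      ≤ |u β * v β - u α * v α| + |∫ y in α..β, u' y * v y| := abs_sub _ _
    _ ≤ |u β * v β| + |u α * v α| + |∫ y in α..β, u' y * v y| := by
        linarith [abs_sub (u β * v β) (u α * v α)]
    _ ≤ 1/lam + 1/lam + 1/lam := by linarith
    _ = 3 / lam := by ring

lemma abs_cos_sub_cos_le (x y : ℝ) : |Real.cos x - Real.cos y| ≤ |x - y| := by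
  rw [Real.cos_sub_cos, abs_mul, abs_mul, show |(-2:ℝ)| = 2 by norm_num]
  calc 2 * |Real.sin ((x+y)/2)| * |Real.sin ((x-y)/2)|
      ≤ 2 * 1 * |(x-y)/2| := by
        exact mul_le_mul
          (mul_le_mul_of_nonneg_left (Real.abs_sin_le_one _) (by norm_num))
          (Real.abs_sin_le_abs) (abs_nonneg _) (by norm_num)
    _ = |x - y| := by rw [abs_div, abs_two]; ring

end AuxLemmas

set_option maxHeartbeats 1000000 in
/-- If `Ai` is the Airy function (defined by the improper oscillatory
integral) and `J n` is the Bessel function of the first kind of integer order `n`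
(defined by Bessel's integral), then for every fixed `a : ℝ`,
`(n/2)^(1/3) * J_n(n - a (n/2)^(1/3)) → Ai a` as `n → ∞`. -/
theorem bessel_airy_limit
    (Ai : ℝ → ℝ)
    (hAi : ∀ z : ℝ, Tendsto (fun R : ℝ => ∫ y in (0:ℝ)..R, Real.cos (z * y + y ^ 3 / 3))
      atTop (nhds (π * Ai z)))
    (J : ℕ → ℝ → ℝ)
    (hJ : ∀ (n : ℕ) (x : ℝ),
      J n x = (1 / π) * ∫ θ in (0:ℝ)..π, Real.cos ((n : ℝ) * θ - x * Real.sin θ))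
    (a : ℝ) :
    Tendsto (fun n : ℕ =>
        ((n : ℝ) / 2) ^ ((1:ℝ)/3) * J n ((n : ℝ) - a * ((n : ℝ) / 2) ^ ((1:ℝ)/3)))
      atTop (nhds (Ai a)) := by
  have hπ : 0 < π := Real.pi_pos
  rw [Metric.tendsto_atTop]
  intro ε hε
  set ε' : ℝ := π * ε / 2 with hε'def
  have hε' : 0 < ε' := by positivity
  -- choose R
  obtain ⟨R₁, hR₁⟩ := Metric.tendsto_atTop.mp (hAi a) (ε'/3) (by positivity)
  set R : ℝ := max R₁ (1 + π * Real.sqrt (9/ε' + |a|)) with hRdef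
  have hsqnn : 0 ≤ Real.sqrt (9/ε' + |a|) := Real.sqrt_nonneg _
  have hR1 : (1:ℝ) ≤ R := le_trans (by nlinarith) (le_max_right _ _)
  have hRpos : (0:ℝ) < R := lt_of_lt_of_le one_pos hR1
  set lam : ℝ := 4 / π^2 * R^2 - |a| with hlamdef
  have hlam9 : 9 / ε' < lam := by
    have hs : Real.sqrt (9/ε' + |a|) ^ 2 = 9/ε' + |a| := Real.sq_sqrt (by positivity)
    have hRge : π * Real.sqrt (9/ε' + |a|) ≤ R :=
      le_trans (by nlinarith) (le_max_right _ _)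
    have h2 : π^2 * (9/ε' + |a|) ≤ R^2 := by
      have hms := mul_self_le_mul_self (by positivity : (0:ℝ) ≤ π * Real.sqrt (9/ε' + |a|)) hRge
      nlinarith
    have h3 : 4 * (9/ε' + |a|) ≤ 4/π^2 * R^2 := by
      rw [div_mul_eq_mul_div, le_div_iff₀ (by positivity)]
      nlinarith
    have h9 : 0 < 9/ε' := by positivity
    have := abs_nonneg a
    nlinarith
  have hlampos : 0 < lam := lt_trans (by positivity) hlam9
  have hvdc_small : 3 / lam < ε' / 3 := by
    rw [div_lt_div_iff₀ hlampos (by norm_num)]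
    rw [div_lt_iff₀ hε'] at hlam9
    nlinarith
  -- choose N
  set H : ℝ := max R (max (Real.sqrt |a|) (1 + 3 * R^5 * (1+|a|) / ε')) with hHdef
  have hhtop : Tendsto (fun n : ℕ => ((n:ℝ)/2) ^ ((1:ℝ)/3)) atTop atTop :=
    (tendsto_rpow_atTop (by norm_num : (0:ℝ) < 1/3)).comp
      (Tendsto.atTop_div_const (by norm_num) tendsto_natCast_atTop_atTop)
  obtain ⟨N, hN⟩ := eventually_atTop.mp (hhtop.eventually_ge_atTop H)
  refine ⟨N, fun n hn => ?_⟩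
  set h : ℝ := ((n:ℝ)/2) ^ ((1:ℝ)/3) with hhdef
  have hH : H ≤ h := hN n hn
  have hRh : R ≤ h := le_trans (le_max_left _ _) hH
  have h1h : (1:ℝ) ≤ h := le_trans hR1 hRh
  have hpos : (0:ℝ) < h := lt_of_lt_of_le one_pos h1h
  have hane : h ≠ 0 := hpos.ne'
  have hsq : |a| ≤ h^2 := by
    have h1 : Real.sqrt |a| ≤ h :=
      le_trans (le_trans (le_max_left _ _) (le_max_right _ _)) hH
    nlinarith [Real.sq_sqrt (abs_nonneg a), Real.sqrt_nonneg |a|]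
  have hX : 3 * R^5 * (1+|a|) / ε' < h :=
    lt_of_lt_of_le (lt_one_add _)
      (le_trans (le_trans (le_max_right _ _) (le_max_right _ _)) hH)
  have h3 : h^3 = (n:ℝ)/2 := by
    rw [hhdef, ← Real.rpow_natCast (((n:ℝ)/2) ^ ((1:ℝ)/3)) 3,
      ← Real.rpow_mul (by positivity)]
    norm_num
  have hn2 : (n:ℝ) = 2 * h^3 := by rw [h3]; ring
  clear_value h
  set x : ℝ := (n:ℝ) - a * h with hxdef
  -- phase and derivatives
  set φ : ℝ → ℝ := fun y => 2*h^2*y - (2*h^3 - a*h) * Real.sin (y/h) with hφdef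
  set p : ℝ → ℝ := fun y => 2*h^2 - (2*h^2 - a) * Real.cos (y/h) with hpdef
  set q : ℝ → ℝ := fun y => ((2*h^2 - a)/h) * Real.sin (y/h) with hqdef
  have hdiv : ∀ y : ℝ, HasDerivAt (fun y : ℝ => y / h) (1/h) y := by
    intro y
    simpa using (hasDerivAt_id y).div_const h
  have hdφ : ∀ y, HasDerivAt φ (p y) y := by
    intro y
    have hsin : HasDerivAt (fun y : ℝ => Real.sin (y/h)) (Real.cos (y/h) * (1/h)) y :=
      (hdiv y).sin
    have hlin : HasDerivAt (fun y : ℝ => 2*h^2*y) (2*h^2) y := by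
      simpa using (hasDerivAt_id y).const_mul (2*h^2)
    have := hlin.sub (hsin.const_mul (2*h^3 - a*h))
    refine this.congr_deriv ?_
    rw [hpdef]
    field_simp
  have hdp : ∀ y, HasDerivAt p (q y) y := by
    intro y
    have hcos : HasDerivAt (fun y : ℝ => Real.cos (y/h)) (-Real.sin (y/h) * (1/h)) y :=
      (hdiv y).cos
    have := (hasDerivAt_const y (2*h^2)).sub (hcos.const_mul (2*h^2 - a))
    refine this.congr_deriv ?_
    rw [hqdef]
    field_simp
    ring
  have hφc : Continuous φ := continuous_iff_continuousAt.mpr fun y => (hdφ y).continuousAt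
  have hqc : Continuous q := by
    rw [hqdef]
    exact continuous_const.mul (Real.continuous_sin.comp (continuous_id.div_const h))
  have hcosφ : Continuous (fun y => Real.cos (φ y)) := Real.continuous_cos.comp hφc
  clear_value x φ p q
  -- change of variables
  have hchg : ∫ y in (0:ℝ)..(π*h), Real.cos (φ y)
      = h * ∫ θ in (0:ℝ)..π, Real.cos ((n:ℝ)*θ - x*Real.sin θ) := by
    have heqfun : ∀ y : ℝ, Real.cos (φ y)
        = (fun θ => Real.cos ((n:ℝ)*θ - x*Real.sin θ)) (y / h) := by
      intro y
      simp only [hφdef, hxdef]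
      congr 1
      rw [hn2]
      field_simp
    rw [intervalIntegral.integral_congr (fun y _ => heqfun y),
      intervalIntegral.integral_comp_div (fun θ => Real.cos ((n:ℝ)*θ - x*Real.sin θ)) hane,
      zero_div, mul_div_cancel_right₀ π hane, smul_eq_mul]
  have hFval : h * J n x = (1/π) * ∫ y in (0:ℝ)..(π*h), Real.cos (φ y) := by
    rw [hJ, hchg]; ring
  -- split
  have hπh : R ≤ π * h := by nlinarith [Real.pi_gt_three]
  have hint1 : IntervalIntegrable (fun y => Real.cos (φ y)) volume 0 R :=
    hcosφ.intervalIntegrable _ _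
  have hint2 : IntervalIntegrable (fun y => Real.cos (φ y)) volume R (π*h) :=
    hcosφ.intervalIntegrable _ _
  have hintψ : IntervalIntegrable (fun y => Real.cos (a*y + y^3/3)) volume 0 R := by
    apply Continuous.intervalIntegrable
    exact Real.continuous_cos.comp
      ((continuous_const.mul continuous_id).add ((continuous_pow 3).div_const 3))
  have hsplit : ∫ y in (0:ℝ)..(π*h), Real.cos (φ y)
      = (∫ y in (0:ℝ)..R, Real.cos (φ y)) + ∫ y in R..(π*h), Real.cos (φ y) :=
    (intervalIntegral.integral_add_adjacent_intervals hint1 hint2).symm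
  -- T1 : main interval comparison
  have hT1 : |(∫ y in (0:ℝ)..R, Real.cos (φ y))
      - ∫ y in (0:ℝ)..R, Real.cos (a*y + y^3/3)| < ε'/3 := by
    rw [← intervalIntegral.integral_sub hint1 hintψ]
    have hbound : ∀ y ∈ Set.uIoc (0:ℝ) R,
        ‖Real.cos (φ y) - Real.cos (a*y + y^3/3)‖ ≤ (1+|a|)*R^4/h := by
      intro y hy
      rw [Set.uIoc_of_le hRpos.le] at hy
      obtain ⟨hy0, hyR⟩ := hy
      set u : ℝ := y / h with hudef
      have hu0 : 0 ≤ u := by positivity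
      have hhu : h * u = y := by rw [hudef]; field_simp
      have hu1 : u ≤ 1 := by
        rw [hudef, div_le_one hpos]
        exact le_trans hyR hRh
      have habsu : |u| ≤ 1 := abs_le.mpr ⟨by linarith, hu1⟩
      have hs1 : |Real.sin u - (u - u^3/6)| ≤ |u|^4 * (5/96) := by
        have h5 := Real.sin_bound habsu
        have h0 := abs_nonneg u
        nlinarith [pow_nonneg h0 4, mul_le_mul_of_nonneg_left habsu (pow_nonneg h0 4)]
      rw [abs_of_nonneg hu0] at hs1
      have hs2 : |Real.sin u - u| ≤ u^3 := by
        have hrw : Real.sin u - u = (Real.sin u - (u - u^3/6)) + (-(u^3)/6) := by ring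
        rw [hrw]
        have h4 : u^4 ≤ u^3 := by nlinarith [mul_nonneg (pow_nonneg hu0 3) (sub_nonneg.mpr hu1)]
        calc |(Real.sin u - (u - u^3/6)) + (-(u^3)/6)|
            ≤ |Real.sin u - (u - u^3/6)| + |(-(u^3))/6| := abs_add_le _ _
          _ ≤ u^4 * (5/96) + u^3/6 := by
              rw [abs_div, abs_neg, abs_of_nonneg (by positivity : (0:ℝ) ≤ u^3)]
              norm_num
              linarith
          _ ≤ u^3 := by linarith [pow_nonneg hu0 3]
      have hid : φ y - (a*y + y^3/3)
          = -(2*h^3) * (Real.sin u - (u - u^3/6)) + (a*h)*(Real.sin u - u) := by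
        rw [hφdef]
        simp only
        rw [← hhu, mul_div_cancel_left₀ u hane]
        ring
      have key : 2*h^3*(u^4*(5/96)) + |a| * h*u^3 ≤ (1+|a|)*R^4/h := by
        rw [le_div_iff₀ hpos]
        have e4 : h^4 * u^4 = y^4 := by rw [← mul_pow, hhu]
        have e3 : h^3 * u^3 = y^3 := by rw [← mul_pow, hhu]
        have hy4 : y^4 ≤ R^4 := pow_le_pow_left₀ hy0.le hyR 4
        have hy3 : y^3 ≤ R^3 := pow_le_pow_left₀ hy0.le hyR 3
        have hR34 : R^3 ≤ R^4 := by nlinarith [mul_nonneg (pow_nonneg hRpos.le 3) (sub_nonneg.mpr hR1)]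
        have h23 : h^2*u^3 ≤ h^3*u^3 := by nlinarith [mul_nonneg (mul_nonneg (sq_nonneg h) (pow_nonneg hu0 3)) (sub_nonneg.mpr h1h)]
        have hb : |a| * (h^2*u^3) ≤ |a| * R^4 := by
          apply mul_le_mul_of_nonneg_left _ (abs_nonneg a)
          calc h^2*u^3 ≤ h^3*u^3 := h23
            _ = y^3 := e3
            _ ≤ R^3 := hy3
            _ ≤ R^4 := hR34
        have expand : (2*h^3*(u^4*(5/96)) + |a| * h*u^3) * h
            = (5/48)*(h^4*u^4) + |a| * (h^2*u^3) := by ring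
        rw [expand, e4]
        have hy4nn : (0:ℝ) ≤ y^4 := by positivity
        linarith
      rw [Real.norm_eq_abs]
      calc |Real.cos (φ y) - Real.cos (a*y + y^3/3)|
          ≤ |φ y - (a*y + y^3/3)| := _root_.abs_cos_sub_cos_le _ _
        _ = |(-(2*h^3)) * (Real.sin u - (u - u^3/6)) + (a*h)*(Real.sin u - u)| := by
            rw [hid]
        _ ≤ |(-(2*h^3)) * (Real.sin u - (u - u^3/6))| + |(a*h)*(Real.sin u - u)| :=
            abs_add_le _ _
        _ = 2*h^3 * |Real.sin u - (u - u^3/6)| + |a| * h * |Real.sin u - u| := by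
            rw [abs_mul, abs_mul, abs_neg, abs_of_pos (by positivity : (0:ℝ) < 2*h^3),
              abs_mul, abs_of_pos hpos]
        _ ≤ 2*h^3*(u^4*(5/96)) + |a| * h*u^3 := by
            have t1 : 2*h^3 * |Real.sin u - (u - u^3/6)| ≤ 2*h^3*(u^4*(5/96)) :=
              mul_le_mul_of_nonneg_left hs1 (by positivity)
            have t2 : |a| * h * |Real.sin u - u| ≤ |a| * h*u^3 :=
              mul_le_mul_of_nonneg_left hs2 (by positivity)
            linarith
        _ ≤ (1+|a|)*R^4/h := key
    have := intervalIntegral.norm_integral_le_of_norm_le_const hbound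
    rw [Real.norm_eq_abs, sub_zero, abs_of_pos hRpos] at this
    have hfin : (1+|a|)*R^4/h * R < ε'/3 := by
      rw [div_lt_iff₀ hε'] at hX
      rw [div_mul_eq_mul_div, div_lt_iff₀ hpos]
      nlinarith
    linarith
  -- T2 : Airy integral tail
  have hT2 : |(∫ y in (0:ℝ)..R, Real.cos (a*y + y^3/3)) - π * Ai a| < ε'/3 := by
    have := hR₁ R (le_max_left _ _)
    rwa [Real.dist_eq] at this
  -- T3 : oscillatory tail via van der Corput
  have hT3 : |∫ y in R..(π*h), Real.cos (φ y)| ≤ 3 / lam := by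
    apply vdc φ p q R (π*h) lam hπh hlampos hdφ hdp hqc
    · intro y hy
      obtain ⟨hy1, hy2⟩ := hy
      have hu0 : 0 ≤ y/h := div_nonneg (le_trans hRpos.le hy1) hpos.le
      have huπ : y/h ≤ π := by rw [div_le_iff₀ hpos]; linarith
      simp only [hqdef]
      apply mul_nonneg
      · apply div_nonneg _ hpos.le
        linarith [le_abs_self a, hsq, sq_nonneg h]
      · exact Real.sin_nonneg_of_nonneg_of_le_pi hu0 huπ
    · intro y hy
      obtain ⟨hy1, hy2⟩ := hy
      have hy0 : 0 < y := lt_of_lt_of_le hRpos hy1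
      set u : ℝ := y / h with hudef
      have hu0 : 0 ≤ u := by positivity
      have huπ : u ≤ π := by rw [hudef, div_le_iff₀ hpos]; linarith
      have hhu : h * u = y := by rw [hudef]; field_simp
      have hcosb : Real.cos u ≤ 1 - 2/π^2 * u^2 :=
        Real.cos_le_one_sub_mul_cos_sq (abs_le.mpr ⟨by linarith [hπ], huπ⟩)
      have hrw : p y = 2*h^2*(1 - Real.cos u) + a * Real.cos u := by
        rw [hpdef]; simp only; ring
      have hc1 : 2*h^2*(1 - Real.cos u) ≥ 2*h^2*(2/π^2*u^2) := by
        apply mul_le_mul_of_nonneg_left _ (by positivity : (0:ℝ) ≤ 2*h^2)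
        linarith
      have he : h^2*u^2 = y^2 := by rw [← mul_pow, hhu]
      have hy2' : R^2 ≤ y^2 := pow_le_pow_left₀ hRpos.le hy1 2
      have hca : a * Real.cos u ≥ -|a| := by
        have h1 : |a * Real.cos u| ≤ |a| := by
          rw [abs_mul]
          simpa using mul_le_mul_of_nonneg_left (Real.abs_cos_le_one u) (abs_nonneg a)
        linarith [neg_abs_le (a * Real.cos u)]
      have hπ2 : (0:ℝ) < π^2 := by positivity
      have hexp : 2*h^2*(2/π^2*u^2) = 4/π^2*(h^2*u^2) := by ring
      have hfin : 4/π^2*R^2 ≤ 4/π^2*(h^2*u^2) := by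
        rw [he]
        apply mul_le_mul_of_nonneg_left hy2' (by positivity)
      rw [hlamdef, hrw]
      linarith
  -- assemble
  have hIb : |(∫ y in (0:ℝ)..(π*h), Real.cos (φ y)) - π * Ai a| < ε' := by
    rw [hsplit]
    set A : ℝ := ∫ y in (0:ℝ)..R, Real.cos (φ y) with hA
    set B : ℝ := ∫ y in (0:ℝ)..R, Real.cos (a*y + y^3/3) with hB
    set C : ℝ := ∫ y in R..(π*h), Real.cos (φ y) with hC
    clear_value A B C
    have hdecomp : A + C - π * Ai a = ((A - B) + (B - π * Ai a)) + C := by ring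
    rw [hdecomp]
    have t1 : |((A - B) + (B - π * Ai a)) + C| ≤ |(A - B) + (B - π * Ai a)| + |C| :=
      abs_add_le _ _
    have t2 : |(A - B) + (B - π * Ai a)| ≤ |A - B| + |B - π * Ai a| := abs_add_le _ _
    have t3 : |C| < ε'/3 := lt_of_le_of_lt hT3 hvdc_small
    have : |A - B| + |B - π * Ai a| + |C| < ε'/3 + ε'/3 + ε'/3 := by
      linarith [hT1, hT2]
    linarith
  rw [Real.dist_eq, hFval]
  have hrw2 : (1/π) * (∫ y in (0:ℝ)..(π*h), Real.cos (φ y)) - Ai a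
      = (1/π) * ((∫ y in (0:ℝ)..(π*h), Real.cos (φ y)) - π * Ai a) := by
    field_simp
  rw [hrw2, abs_mul, abs_of_pos (by positivity : (0:ℝ) < 1/π)]
  calc (1/π) * |(∫ y in (0:ℝ)..(π*h), Real.cos (φ y)) - π * Ai a|
      < (1/π) * ε' := by
        apply mul_lt_mul_of_pos_left hIb (by positivity)
    _ = ε/2 := by rw [hε'def]; field_simp
    _ < ε := by linarith
end

section
/- Let Ai denote the Airy function, Ai(z) = (1/π) · lim_{R→∞} ∫₀^R cos(zy + y³/3) dy, and for n ∈ ℕ let J_n denote the Bessel function of the first kind given by Bessel's integral J_n(x) = (1/π) ∫₀^π cos(nθ − x · sin θ) dθ. Then for every fixed a ∈ ℝ, lim_{n→∞} (n/2)^{2/3} · (d/dx) J_n(x) |_{x = n − a·(n/2)^{1/3}} = −Ai'(a), where Ai' is the derivative of Ai and (d/dx) J_n is the derivative of x ↦ J_n(x). -/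
set_option maxHeartbeats 1600000

open Real Filter MeasureTheory intervalIntegral Set Topology

lemma osc_bound_s3 (c d m K : ℝ) (hm : 0 < m) (hc : 1 ≤ c) (hcd : c ≤ d) (hK : 0 ≤ K)
    (φ p q g g' : ℝ → ℝ)
    (hφ : ∀ y ∈ Icc c d, HasDerivAt φ (p y) y)
    (hp : ∀ y ∈ Icc c d, HasDerivAt p (q y) y)
    (hg : ∀ y ∈ Icc c d, HasDerivAt g (g' y) y)
    (hqc : ContinuousOn q (Icc c d))
    (hg'c : ContinuousOn g' (Icc c d))
    (hpl : ∀ y ∈ Icc c d, m * y ^ 2 ≤ p y)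
    (hq : ∀ y ∈ Icc c d, |q y| ≤ K * y)
    (hgb : ∀ y ∈ Icc c d, |g y| ≤ y)
    (hg'b : ∀ y ∈ Icc c d, |g' y| ≤ 1) :
    |∫ y in c..d, g y * Real.sin (φ y)| ≤ (3 / m + K / m ^ 2) / c := by
  have hc0 : 0 < c := lt_of_lt_of_le one_pos hc
  have hd0 : 0 < d := lt_of_lt_of_le hc0 hcd
  have hIcc : uIcc c d = Icc c d := uIcc_of_le hcd
  have hy0 : ∀ y ∈ Icc c d, 0 < y := fun y hy => lt_of_lt_of_le hc0 hy.1
  have hppos : ∀ y ∈ Icc c d, 0 < p y := by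
    intro y hy
    have := hy0 y hy
    exact lt_of_lt_of_le (by positivity) (hpl y hy)
  set u : ℝ → ℝ := fun y => g y / p y with hu_def
  set u' : ℝ → ℝ := fun y => (g' y * p y - g y * q y) / (p y) ^ 2 with hu'_def
  set v : ℝ → ℝ := fun y => -(Real.cos (φ y)) with hv_def
  set v' : ℝ → ℝ := fun y => p y * Real.sin (φ y) with hv'_def
  have hu : ∀ y ∈ Icc c d, HasDerivAt u (u' y) y := fun y hy =>
    (hg y hy).div (hp y hy) (hppos y hy).ne'
  have hv : ∀ y ∈ Icc c d, HasDerivAt v (v' y) y := by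
    intro y hy
    have h1 : HasDerivAt (fun y => Real.cos (φ y)) (-Real.sin (φ y) * p y) y :=
      (hφ y hy).cos
    have : HasDerivAt v (-(-Real.sin (φ y) * p y)) y := h1.neg
    convert this using 1
    show p y * Real.sin (φ y) = -(-Real.sin (φ y) * p y); ring
  have hpc : ContinuousOn p (Icc c d) := fun y hy => (hp y hy).continuousAt.continuousWithinAt
  have hgc : ContinuousOn g (Icc c d) := fun y hy => (hg y hy).continuousAt.continuousWithinAt
  have hφc : ContinuousOn φ (Icc c d) := fun y hy => (hφ y hy).continuousAt.continuousWithinAt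
  have hu'c : ContinuousOn u' (Icc c d) := by
    apply ContinuousOn.div
    · exact (hg'c.mul hpc).sub (hgc.mul hqc)
    · exact hpc.pow 2
    · intro y hy; exact pow_ne_zero 2 (hppos y hy).ne'
  have hv'c : ContinuousOn v' (Icc c d) :=
    hpc.mul (Real.continuous_sin.comp_continuousOn hφc)
  have hu'int : IntervalIntegrable u' volume c d := by
    rw [intervalIntegrable_iff_integrableOn_Icc_of_le hcd]
    exact hu'c.integrableOn_compact isCompact_Icc
  have hv'int : IntervalIntegrable v' volume c d := by
    rw [intervalIntegrable_iff_integrableOn_Icc_of_le hcd]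
    exact hv'c.integrableOn_compact isCompact_Icc
  have hcongr : ∫ y in c..d, g y * Real.sin (φ y) = ∫ y in c..d, u y * v' y := by
    apply intervalIntegral.integral_congr
    intro y hy
    rw [hIcc] at hy
    have hpne := (hppos y hy).ne'
    simp only [hu_def, hv'_def]
    field_simp
  have hibp : ∫ y in c..d, u y * v' y
      = u d * v d - u c * v c - ∫ y in c..d, u' y * v y := by
    apply intervalIntegral.integral_mul_deriv_eq_deriv_mul
    · intro y hy; rw [hIcc] at hy; exact hu y hy
    · intro y hy; rw [hIcc] at hy; exact hv y hy
    · exact hu'int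
    · exact hv'int
  -- bounds
  have hub : ∀ y ∈ Icc c d, |u y| ≤ 1 / (m * y) := by
    intro y hy
    have hpy := hppos y hy
    have hyy := hy0 y hy
    rw [hu_def, abs_div, abs_of_pos hpy, div_le_div_iff₀ hpy (by positivity)]
    have h1 : |g y| * (m * y) ≤ y * (m * y) :=
      mul_le_mul_of_nonneg_right (hgb y hy) (by positivity)
    have h2 : y * (m * y) = m * y ^ 2 := by ring
    calc |g y| * (m * y) ≤ m * y ^ 2 := by rw [← h2]; exact h1
      _ ≤ p y := hpl y hy
      _ = 1 * p y := (one_mul _).symm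
  have hvb : ∀ y, |v y| ≤ 1 := by
    intro y; rw [hv_def]
    simp only [abs_neg]
    exact Real.abs_cos_le_one _
  have hu'b : ∀ y ∈ Icc c d, |u' y| ≤ (1 / m + K / m ^ 2) / y ^ 2 := by
    intro y hy
    have hpy := hppos y hy
    have hyy := hy0 y hy
    have hple := hpl y hy
    have habs : |u' y| ≤ (p y + K * y ^ 2) / (p y) ^ 2 := by
      rw [hu'_def, abs_div, abs_of_pos (pow_pos hpy 2)]
      gcongr
      calc |g' y * p y - g y * q y| ≤ |g' y * p y| + |g y * q y| := abs_sub _ _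
        _ = |g' y| * p y + |g y| * |q y| := by rw [abs_mul, abs_mul, abs_of_pos hpy]
        _ ≤ 1 * p y + y * (K * y) := by
            have h1 := hg'b y hy
            have h2 := hgb y hy
            have h3 := hq y hy
            have h4 := abs_nonneg (g y)
            have h5 := abs_nonneg (q y)
            have h6 := abs_nonneg (g' y)
            nlinarith
        _ = p y + K * y ^ 2 := by ring
    refine habs.trans ?_
    rw [div_le_div_iff₀ (pow_pos hpy 2) (pow_pos hyy 2)]
    have e1 : p y * (m * y ^ 2) ≤ p y ^ 2 := by
      have := mul_le_mul_of_nonneg_left hple hpy.le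
      nlinarith
    have e2 : (m * y ^ 2) ^ 2 ≤ p y ^ 2 := by
      have h0 : (0:ℝ) ≤ m * y ^ 2 := by positivity
      nlinarith
    have hm2 : (0:ℝ) < m ^ 2 := by positivity
    have goal1 : (p y + K * y ^ 2) * y ^ 2 * m ^ 2
        ≤ (1 / m + K / m ^ 2) * p y ^ 2 * m ^ 2 := by
      have expand : (1 / m + K / m ^ 2) * p y ^ 2 * m ^ 2
          = m * p y ^ 2 + K * p y ^ 2 := by field_simp
      rw [expand]
      nlinarith [mul_le_mul_of_nonneg_left e1 hm.le, mul_le_mul_of_nonneg_left e2 hK]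
    nlinarith [goal1]
  -- assemble
  rw [hcongr, hibp]
  have habs1 : |u d * v d| ≤ 1 / (m * c) := by
    rw [abs_mul]
    calc |u d| * |v d| ≤ (1 / (m * d)) * 1 :=
          mul_le_mul (hub d ⟨hcd, le_rfl⟩) (hvb d) (abs_nonneg _) (by positivity)
      _ = 1 / (m * d) := mul_one _
      _ ≤ 1 / (m * c) :=
          one_div_le_one_div_of_le (by positivity) (mul_le_mul_of_nonneg_left hcd hm.le)
  have habs2 : |u c * v c| ≤ 1 / (m * c) := by
    rw [abs_mul]
    calc |u c| * |v c| ≤ (1 / (m * c)) * 1 :=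
          mul_le_mul (hub c ⟨le_rfl, hcd⟩) (hvb c) (abs_nonneg _) (by positivity)
      _ = 1 / (m * c) := mul_one _
  have hint : |∫ y in c..d, u' y * v y| ≤ (1 / m + K / m ^ 2) / c := by
    have hbd : ∀ᵐ t ∂volume.restrict (Set.uIoc c d),
        ‖u' t * v t‖ ≤ (1 / m + K / m ^ 2) / t ^ 2 := by
      rw [uIoc_of_le hcd]
      refine (ae_restrict_iff' measurableSet_Ioc).mpr (Filter.Eventually.of_forall ?_)
      intro t ht
      have ht' : t ∈ Icc c d := ⟨ht.1.le, ht.2⟩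
      have : ‖u' t * v t‖ = |u' t| * |v t| := by rw [Real.norm_eq_abs, abs_mul]
      rw [this]
      have ht0 : 0 < t := lt_of_lt_of_le hc0 ht'.1
      calc |u' t| * |v t| ≤ ((1 / m + K / m ^ 2) / t ^ 2) * 1 :=
            mul_le_mul (hu'b t ht') (hvb t) (abs_nonneg _) (by positivity)
        _ = (1 / m + K / m ^ 2) / t ^ 2 := mul_one _
    have hgint : IntervalIntegrable (fun t : ℝ => (1 / m + K / m ^ 2) / t ^ 2) volume c d := by
      apply ContinuousOn.intervalIntegrable
      rw [hIcc]
      apply ContinuousOn.div continuousOn_const (continuousOn_pow 2)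
      intro y hy; exact pow_ne_zero 2 (hy0 y hy).ne'
    have hle := intervalIntegral.norm_integral_le_abs_of_norm_le hbd hgint
    have hval : ∫ t in c..d, (1 / m + K / m ^ 2) / t ^ 2
        = (1 / m + K / m ^ 2) * (c⁻¹ - d⁻¹) := by
      have hinv : ∫ t in c..d, (t ^ 2)⁻¹ = c⁻¹ - d⁻¹ := by
        have hder : ∀ t ∈ uIcc c d, HasDerivAt (fun y : ℝ => -(y⁻¹)) ((t ^ 2)⁻¹) t := by
          intro t ht
          rw [hIcc] at ht
          have := (hasDerivAt_inv (hy0 t ht).ne').neg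
          simpa using (show HasDerivAt (fun y : ℝ => -(y⁻¹)) (-(-(t ^ 2)⁻¹)) t from this)
        have hintg : IntervalIntegrable (fun t : ℝ => (t ^ 2)⁻¹) volume c d := by
          apply ContinuousOn.intervalIntegrable
          rw [hIcc]
          apply ContinuousOn.inv₀ (continuousOn_pow 2)
          intro y hy; exact pow_ne_zero 2 (hy0 y hy).ne'
        have := intervalIntegral.integral_eq_sub_of_hasDerivAt hder hintg
        rw [this]; ring
      have heq : (fun t : ℝ => (1 / m + K / m ^ 2) / t ^ 2)
          = fun t : ℝ => (1 / m + K / m ^ 2) * (t ^ 2)⁻¹ := by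
        funext t; rw [div_eq_mul_inv]
      rw [heq, intervalIntegral.integral_const_mul, hinv]
    rw [Real.norm_eq_abs] at hle
    have hnn : (0:ℝ) ≤ c⁻¹ - d⁻¹ := by
      rw [sub_nonneg]
      exact inv_anti₀ hc0 hcd
    rw [hval, abs_of_nonneg (mul_nonneg (by positivity) hnn)] at hle
    refine hle.trans ?_
    have h9 : c⁻¹ - d⁻¹ ≤ c⁻¹ := by
      have : (0:ℝ) < d⁻¹ := by positivity
      linarith
    calc (1 / m + K / m ^ 2) * (c⁻¹ - d⁻¹) ≤ (1 / m + K / m ^ 2) * c⁻¹ :=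
          mul_le_mul_of_nonneg_left h9 (by positivity)
      _ = (1 / m + K / m ^ 2) / c := by ring
  calc |u d * v d - u c * v c - ∫ y in c..d, u' y * v y|
      ≤ |u d * v d - u c * v c| + |∫ y in c..d, u' y * v y| := abs_sub _ _
    _ ≤ (|u d * v d| + |u c * v c|) + |∫ y in c..d, u' y * v y| := by
        gcongr
        exact abs_sub _ _
    _ ≤ (1 / (m * c) + 1 / (m * c)) + (1 / m + K / m ^ 2) / c := by
        gcongr
    _ = (3 / m + K / m ^ 2) / c := by field_simp; ring

lemma one_sub_cos_bound (t : ℝ) (h0 : 0 ≤ t) (hπ : t ≤ π) :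
    2 * t ^ 2 / π ^ 2 ≤ 1 - Real.cos t := by
  have hπ0 := Real.pi_pos
  have hpyth := Real.sin_sq_add_cos_sq (t / 2)
  have h2 : Real.cos t = 2 * Real.cos (t / 2) ^ 2 - 1 := by
    have h := Real.cos_two_mul (t / 2)
    have e : 2 * (t / 2) = t := by ring
    rw [e] at h
    exact h.symm ▸ h
  have h3 : t / π ≤ Real.sin (t / 2) := by
    calc t / π = 2 / π * (t / 2) := by ring
      _ ≤ Real.sin (t / 2) := Real.mul_le_sin (by linarith) (by linarith)
  have h4 : (t / π) ^ 2 ≤ Real.sin (t / 2) ^ 2 :=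
    pow_le_pow_left₀ (by positivity) h3 2
  have h5 : (t / π) ^ 2 = t ^ 2 / π ^ 2 := by ring
  have h6 : 2 * t ^ 2 / π ^ 2 = 2 * (t ^ 2 / π ^ 2) := by ring
  rw [h5] at h4
  rw [h6]
  linarith
  
lemma airy_tail (B z c d : ℝ) (hz : |z| ≤ B) (hc1 : 1 ≤ c) (hcB : 2 * B ≤ c ^ 2)
    (hcd : c ≤ d) :
    |∫ y in c..d, y * Real.sin (z * y + y ^ 3 / 3)| ≤ 14 / c := by
  have hc0 : 0 < c := lt_of_lt_of_le one_pos hc1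
  have h := osc_bound_s3 c d (1/2) 2 (by norm_num) hc1 hcd (by norm_num)
    (fun y => z * y + y ^ 3 / 3) (fun y => z + y ^ 2) (fun y => 2 * y)
    (fun y => y) (fun _ => 1)
    (by
      intro y hy
      have h1 : HasDerivAt (fun y : ℝ => z * y + y ^ 3 / 3)
          (z * 1 + (3 : ℕ) * y ^ 2 / 3) y :=
        ((hasDerivAt_id y).const_mul z).add ((hasDerivAt_pow 3 y).div_const 3)
      convert h1 using 1
      push_cast
      ring)
    (by
      intro y hy
      have h1 : HasDerivAt (fun y : ℝ => z + y ^ 2) ((2 : ℕ) * y ^ 1) y :=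
        (hasDerivAt_pow 2 y).const_add z
      convert h1 using 1
      push_cast
      ring)
    (fun y _ => hasDerivAt_id y)
    (by fun_prop)
    (by fun_prop)
    (by
      intro y hy
      have hyc : c ≤ y := hy.1
      have : c ^ 2 ≤ y ^ 2 := by nlinarith
      have hzz : -|z| ≤ z := neg_abs_le z
      nlinarith)
    (by
      intro y hy
      have : 0 ≤ y := le_trans hc0.le hy.1
      rw [abs_of_nonneg (by positivity)])
    (by
      intro y hy
      have : 0 ≤ y := le_trans hc0.le hy.1
      rw [abs_of_nonneg this])
    (by intro y hy; norm_num)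
  convert h using 2
  norm_num

lemma bessel_tail (a r c : ℝ) (hr : 1 ≤ r) (hc1 : 1 ≤ c) (hca : π ^ 2 * |a| ≤ 2 * c ^ 2)
    (hcd : c ≤ π * r) :
    |∫ y in c..(π * r), (r * Real.sin (y / r)) *
        Real.sin (2 * r ^ 2 * y - (2 * r ^ 3 - a * r) * Real.sin (y / r))|
      ≤ (3 * π ^ 2 / 2 + (2 + |a|) * π ^ 4 / 4) / c := by
  have hπ0 := Real.pi_pos
  have hr0 : (0:ℝ) < r := lt_of_lt_of_le one_pos hr
  have hc0 : 0 < c := lt_of_lt_of_le one_pos hc1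
  have hm : (0:ℝ) < 2 / π ^ 2 := by positivity
  have hK : (0:ℝ) ≤ 2 + |a| := by positivity
  have hyfacts : ∀ y ∈ Icc c (π * r), 0 < y ∧ y / r ≤ π ∧ 0 ≤ y / r := by
    intro y hy
    have hy0 : 0 < y := lt_of_lt_of_le hc0 hy.1
    refine ⟨hy0, ?_, by positivity⟩
    rw [div_le_iff₀ hr0]
    linarith [hy.2]
  have h := osc_bound_s3 c (π * r) (2 / π ^ 2) (2 + |a|) hm hc1 hcd hK
    (fun y => 2 * r ^ 2 * y - (2 * r ^ 3 - a * r) * Real.sin (y / r))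
    (fun y => 2 * r ^ 2 - (2 * r ^ 2 - a) * Real.cos (y / r))
    (fun y => ((2 * r ^ 2 - a) / r) * Real.sin (y / r))
    (fun y => r * Real.sin (y / r))
    (fun y => Real.cos (y / r))
    (by
      intro y hy
      have hdiv : HasDerivAt (fun y : ℝ => y / r) (1 / r) y := by
        simpa using (hasDerivAt_id y).div_const r
      have hsin : HasDerivAt (fun y : ℝ => Real.sin (y / r)) (Real.cos (y / r) * (1 / r)) y :=
        hdiv.sin
      have h1 : HasDerivAt (fun y : ℝ => 2 * r ^ 2 * y - (2 * r ^ 3 - a * r) * Real.sin (y / r))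
          (2 * r ^ 2 * 1 - (2 * r ^ 3 - a * r) * (Real.cos (y / r) * (1 / r))) y :=
        ((hasDerivAt_id y).const_mul (2 * r ^ 2)).sub (hsin.const_mul (2 * r ^ 3 - a * r))
      convert h1 using 1
      field_simp)
    (by
      intro y hy
      have hdiv : HasDerivAt (fun y : ℝ => y / r) (1 / r) y := by
        simpa using (hasDerivAt_id y).div_const r
      have hcos : HasDerivAt (fun y : ℝ => Real.cos (y / r)) (-Real.sin (y / r) * (1 / r)) y :=
        hdiv.cos
      have h1 : HasDerivAt (fun y : ℝ => 2 * r ^ 2 - (2 * r ^ 2 - a) * Real.cos (y / r))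
          (0 - (2 * r ^ 2 - a) * (-Real.sin (y / r) * (1 / r))) y :=
        (hasDerivAt_const y (2 * r ^ 2)).sub (hcos.const_mul (2 * r ^ 2 - a))
      convert h1 using 1
      field_simp
      ring)
    (by
      intro y hy
      have hdiv : HasDerivAt (fun y : ℝ => y / r) (1 / r) y := by
        simpa using (hasDerivAt_id y).div_const r
      have h1 : HasDerivAt (fun y : ℝ => r * Real.sin (y / r))
          ((Real.cos (y / r) * (1 / r)) * r) y := by
        simpa [mul_comm] using (hdiv.sin.const_mul r)
      convert h1 using 1
      field_simp)
    (by fun_prop)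
    (by fun_prop)
    (by
      intro y hy
      obtain ⟨hy0, hyr, hyr0⟩ := hyfacts y hy
      have hcos := one_sub_cos_bound (y / r) hyr0 hyr
      have hle : 2 * (y / r) ^ 2 / π ^ 2 ≤ 1 - Real.cos (y / r) := hcos
      have hsq : (y / r) ^ 2 = y ^ 2 / r ^ 2 := by ring
      have hac : -|a| ≤ a * Real.cos (y / r) ∧ a * Real.cos (y / r) ≤ |a| := by
        constructor
        · nlinarith [Real.neg_one_le_cos (y / r), Real.cos_le_one (y / r),
            neg_abs_le a, le_abs_self a, abs_nonneg a]
        · nlinarith [Real.neg_one_le_cos (y / r), Real.cos_le_one (y / r),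
            neg_abs_le a, le_abs_self a, abs_nonneg a]
      -- p y = 2r² - (2r² - a) cos = 2r²(1 - cos) + a cos
      have hyc : c ≤ y := hy.1
      have hy2 : c ^ 2 ≤ y ^ 2 := by nlinarith
      have hmain : 2 * r ^ 2 * (1 - Real.cos (y / r)) ≥ 4 * y ^ 2 / π ^ 2 := by
        have := mul_le_mul_of_nonneg_left hle (by positivity : (0:ℝ) ≤ 2 * r ^ 2)
        have he : 2 * r ^ 2 * (2 * (y / r) ^ 2 / π ^ 2) = 4 * y ^ 2 / π ^ 2 := by
          field_simp
          ring
        linarith [he ▸ this]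
      have hexp : 2 * r ^ 2 - (2 * r ^ 2 - a) * Real.cos (y / r)
          = 2 * r ^ 2 * (1 - Real.cos (y / r)) + a * Real.cos (y / r) := by ring
      show 2 / π ^ 2 * y ^ 2 ≤ 2 * r ^ 2 - (2 * r ^ 2 - a) * Real.cos (y / r)
      rw [hexp]
      have hfin : 2 / π ^ 2 * y ^ 2 + |a| ≤ 4 * y ^ 2 / π ^ 2 := by
        have hπ2 : (0:ℝ) < π ^ 2 := by positivity
        have key : π ^ 2 * |a| ≤ 2 * y ^ 2 := le_trans hca (by nlinarith)
        have heq : 2 / π ^ 2 * y ^ 2 + |a| = (2 * y ^ 2 + π ^ 2 * |a|) / π ^ 2 := by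
          field_simp
        rw [heq, div_le_div_iff₀ hπ2 hπ2]
        nlinarith
      linarith [hmain, hac.1]
    )
    (by
      intro y hy
      obtain ⟨hy0, hyr, hyr0⟩ := hyfacts y hy
      have hsin : |Real.sin (y / r)| ≤ y / r := by
        have := Real.abs_sin_le_abs (x := y / r)
        rwa [abs_of_nonneg hyr0] at this
      rw [abs_mul]
      have h1 : |(2 * r ^ 2 - a) / r| ≤ (2 * r ^ 2 + |a|) / r := by
        rw [abs_div, abs_of_pos hr0]
        gcongr
        calc |2 * r ^ 2 - a| ≤ |2 * r ^ 2| + |a| := abs_sub _ _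
          _ = 2 * r ^ 2 + |a| := by rw [abs_of_pos (by positivity)]
      calc |(2 * r ^ 2 - a) / r| * |Real.sin (y / r)|
          ≤ ((2 * r ^ 2 + |a|) / r) * (y / r) :=
            mul_le_mul h1 hsin (abs_nonneg _) (by positivity)
        _ = (2 + |a| / r ^ 2) * y := by field_simp
        _ ≤ (2 + |a|) * y := by
            have hr2 : (1:ℝ) ≤ r ^ 2 := by nlinarith
            have : |a| / r ^ 2 ≤ |a| := div_le_self (abs_nonneg a) hr2
            nlinarith)
    (by
      intro y hy
      obtain ⟨hy0, hyr, hyr0⟩ := hyfacts y hy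
      have hsin : |Real.sin (y / r)| ≤ y / r := by
        have := Real.abs_sin_le_abs (x := y / r)
        rwa [abs_of_nonneg hyr0] at this
      rw [abs_mul, abs_of_pos hr0]
      calc r * |Real.sin (y / r)| ≤ r * (y / r) :=
            mul_le_mul_of_nonneg_left hsin hr0.le
        _ = y := by field_simp)
    (fun y _ => Real.abs_cos_le_one _)
  refine le_trans h (le_of_eq ?_)
  have : 3 / (2 / π ^ 2) + (2 + |a|) / (2 / π ^ 2) ^ 2
      = 3 * π ^ 2 / 2 + (2 + |a|) * π ^ 4 / 4 := by
    field_simp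
    ring
  rw [this]

noncomputable def Phi (R z : ℝ) : ℝ := ∫ y in (0:ℝ)..R, y * Real.sin (z * y + y ^ 3 / 3)

lemma airy_integrand_cont (z : ℝ) : Continuous (fun y : ℝ => y * Real.sin (z * y + y ^ 3 / 3)) := by
  fun_prop

lemma phi_tail (B z R S : ℝ) (hz : |z| ≤ B) (h1 : 1 ≤ R) (h2 : 2 * B ≤ R ^ 2) (hRS : R ≤ S) :
    |Phi S z - Phi R z| ≤ 14 / R := by
  have hint : ∀ u v : ℝ, IntervalIntegrable
      (fun y : ℝ => y * Real.sin (z * y + y ^ 3 / 3)) volume u v :=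
    fun u v => (airy_integrand_cont z).intervalIntegrable u v
  have hsplit : Phi R z + ∫ y in R..S, y * Real.sin (z * y + y ^ 3 / 3) = Phi S z :=
    intervalIntegral.integral_add_adjacent_intervals (hint 0 R) (hint R S)
  have : Phi S z - Phi R z = ∫ y in R..S, y * Real.sin (z * y + y ^ 3 / 3) := by
    linarith
  rw [this]
  exact airy_tail B z R S hz h1 h2 hRS

lemma phi_lim (z : ℝ) : ∃ l, Tendsto (fun R : ℝ => Phi R z) atTop (𝓝 l) := by
  apply cauchy_map_iff_exists_tendsto.mp
  rw [Metric.cauchy_iff]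
  refine ⟨Filter.map_neBot, ?_⟩
  intro ε hε
  set R₀ : ℝ := max (max 1 (Real.sqrt (2 * |z|))) (56 / ε) with hR₀
  have hR1 : 1 ≤ R₀ := le_trans (le_max_left _ _) (le_max_left _ _)
  have hR0 : 0 < R₀ := lt_of_lt_of_le one_pos hR1
  have hRsq : 2 * |z| ≤ R₀ ^ 2 := by
    have h1 : Real.sqrt (2 * |z|) ≤ R₀ := le_trans (le_max_right _ _) (le_max_left _ _)
    have h2 : Real.sqrt (2 * |z|) ^ 2 = 2 * |z| := Real.sq_sqrt (by positivity)
    nlinarith [Real.sqrt_nonneg (2 * |z|)]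
  have hRε : 14 / R₀ ≤ ε / 4 := by
    have h1 : 56 / ε ≤ R₀ := le_max_right _ _
    rw [div_le_div_iff₀ hR0 (by norm_num : (0:ℝ) < 4)]
    have h2 : 0 < 56 / ε := by positivity
    calc (14:ℝ) * 4 = 56 := by norm_num
      _ = (56 / ε) * ε := by field_simp
      _ ≤ ε * R₀ := by rw [mul_comm]; exact mul_le_mul_of_nonneg_left h1 hε.le
  refine ⟨(fun R => Phi R z) '' (Ici R₀), ?_, ?_⟩
  · exact mem_map.mpr (mem_of_superset (Ici_mem_atTop R₀) (subset_preimage_image _ _))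
  · rintro x ⟨P, hP, rfl⟩ y ⟨Q, hQ, rfl⟩
    have b1 := phi_tail |z| z R₀ P le_rfl hR1 hRsq hP
    have b2 := phi_tail |z| z R₀ Q le_rfl hR1 hRsq hQ
    rw [Real.dist_eq]
    calc |Phi P z - Phi Q z| ≤ |Phi P z - Phi R₀ z| + |Phi R₀ z - Phi Q z| :=
          abs_sub_le _ _ _
      _ ≤ 14 / R₀ + 14 / R₀ := by
          rw [abs_sub_comm (Phi R₀ z)]
          exact add_le_add b1 b2
      _ ≤ ε / 4 + ε / 4 := add_le_add hRε hRε
      _ < ε := by linarith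
  
noncomputable def Lfun (z : ℝ) : ℝ := (phi_lim z).choose

lemma Lfun_spec (z : ℝ) : Tendsto (fun R : ℝ => Phi R z) atTop (𝓝 (Lfun z)) :=
  (phi_lim z).choose_spec

lemma Lfun_bound (B z R : ℝ) (hz : |z| ≤ B) (h1 : 1 ≤ R) (h2 : 2 * B ≤ R ^ 2) :
    |Phi R z - Lfun z| ≤ 14 / R := by
  have h := Lfun_spec z
  have htend : Tendsto (fun S : ℝ => |Phi R z - Phi S z|) atTop (𝓝 |Phi R z - Lfun z|) :=
    ((h.const_sub (Phi R z)).abs)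
  apply le_of_tendsto htend
  filter_upwards [Ici_mem_atTop R] with S hS
  rw [abs_sub_comm]
  exact phi_tail B z R S hz h1 h2 hS

lemma F_hasDeriv (R z : ℝ) :
    HasDerivAt (fun x : ℝ => ∫ y in (0:ℝ)..R, Real.cos (x * y + y ^ 3 / 3)) (-(Phi R z)) z := by
  have key := intervalIntegral.hasDerivAt_integral_of_dominated_loc_of_deriv_le
    (F := fun x t => Real.cos (x * t + t ^ 3 / 3))
    (F' := fun x t => -(t * Real.sin (x * t + t ^ 3 / 3)))
    (x₀ := z) (a := (0:ℝ)) (b := R) (bound := fun t => |t|) (s := Metric.ball z 1) (μ := volume)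
    (Metric.ball_mem_nhds z one_pos)
    (Filter.Eventually.of_forall fun x =>
      ((Real.continuous_cos.comp (by fun_prop)).aestronglyMeasurable))
    ((Real.continuous_cos.comp (by fun_prop) : Continuous _).intervalIntegrable 0 R)
    ((by fun_prop : Continuous fun t : ℝ => -(t * Real.sin (z * t + t ^ 3 / 3))).aestronglyMeasurable)
    (Filter.Eventually.of_forall fun t _ x _ => by
      rw [norm_neg, norm_mul, Real.norm_eq_abs, Real.norm_eq_abs]
      calc |t| * |Real.sin (x * t + t ^ 3 / 3)| ≤ |t| * 1 :=
            mul_le_mul_of_nonneg_left (Real.abs_sin_le_one _) (abs_nonneg t)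
        _ = |t| := mul_one _)
    ((continuous_abs).intervalIntegrable 0 R)
    (Filter.Eventually.of_forall fun t _ x _ => by
      have h1 : HasDerivAt (fun x : ℝ => x * t + t ^ 3 / 3) t x :=
        (hasDerivAt_mul_const t).add_const _
      have h2 := h1.cos
      exact h2.congr_deriv (by ring))
  have := key.2
  rw [show (∫ t in (0:ℝ)..R, -(t * Real.sin (z * t + t ^ 3 / 3))) = -(Phi R z) by
    rw [intervalIntegral.integral_neg]; rfl] at this
  exact this

lemma airy_hasDeriv (Ai : ℝ → ℝ)
    (hAi : ∀ z : ℝ, Tendsto (fun R : ℝ => ∫ y in (0:ℝ)..R, Real.cos (z * y + y ^ 3 / 3))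
      atTop (nhds (π * Ai z)))
    (a : ℝ) : HasDerivAt Ai (-(Lfun a) / π) a := by
  have hπ := Real.pi_pos
  have hmain : HasDerivAt (fun z => π * Ai z) (-(Lfun a)) a := by
    refine hasDerivAt_of_tendstoUniformlyOn (l := atTop)
      (f := fun (R : ℝ) (z : ℝ) => ∫ y in (0:ℝ)..R, Real.cos (z * y + y ^ 3 / 3))
      (f' := fun (R : ℝ) (z : ℝ) => -(Phi R z)) (g' := fun z => -(Lfun z))
      Metric.isOpen_ball ?_ ?_ ?_ (Metric.mem_ball_self one_pos)
    · rw [Metric.tendstoUniformlyOn_iff]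
      intro ε hε
      set B : ℝ := |a| + 1 with hB
      have hB0 : 0 ≤ B := by positivity
      filter_upwards [Ici_mem_atTop (max (max 1 (Real.sqrt (2 * B))) (28 / ε))] with R hR z hz
      have hR1 : 1 ≤ R := le_trans (le_trans (le_max_left _ _) (le_max_left _ _)) hR
      have hR0 : 0 < R := lt_of_lt_of_le one_pos hR1
      have hRsq : 2 * B ≤ R ^ 2 := by
        have h1 : Real.sqrt (2 * B) ≤ R :=
          le_trans (le_trans (le_max_right _ _) (le_max_left _ _)) hR
        have h2 : Real.sqrt (2 * B) ^ 2 = 2 * B := Real.sq_sqrt (by positivity)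
        nlinarith [Real.sqrt_nonneg (2 * B)]
      have hzB : |z| ≤ B := by
        have := mem_ball_iff_norm.mp hz
        rw [Real.norm_eq_abs] at this
        calc |z| = |a + (z - a)| := by ring_nf
          _ ≤ |a| + |z - a| := abs_add_le _ _
          _ ≤ |a| + 1 := by linarith
      have hbd := Lfun_bound B z R hzB hR1 hRsq
      rw [Real.dist_eq]
      have : -Lfun z - -(Phi R z) = Phi R z - Lfun z := by ring
      rw [this]
      have hRε : 14 / R < ε := by
        have h1 : 28 / ε ≤ R := le_trans (le_max_right _ _) hR
        rw [div_lt_iff₀ hR0]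
        have : 28 / ε * ε ≤ R * ε := mul_le_mul_of_nonneg_right h1 hε.le
        have h3 : 28 / ε * ε = 28 := by field_simp
        nlinarith
      calc |Phi R z - Lfun z| ≤ 14 / R := hbd
        _ < ε := hRε
    · exact Filter.Eventually.of_forall fun R z _ => F_hasDeriv R z
    · exact fun z _ => hAi z
  have h2 : HasDerivAt (fun z => (1 / π) * (π * Ai z)) ((1 / π) * -(Lfun a)) a :=
    hmain.const_mul (1 / π)
  have he : (fun z => (1 / π) * (π * Ai z)) = Ai := by
    funext z; field_simp
  rw [he] at h2
  convert h2 using 1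
  ring

lemma J_hasDeriv (n : ℕ) (x : ℝ) :
    HasDerivAt (fun x : ℝ => (1 / π) * ∫ θ in (0:ℝ)..π, Real.cos ((n : ℝ) * θ - x * Real.sin θ))
      ((1 / π) * ∫ θ in (0:ℝ)..π, Real.sin θ * Real.sin ((n : ℝ) * θ - x * Real.sin θ)) x := by
  have key := intervalIntegral.hasDerivAt_integral_of_dominated_loc_of_deriv_le
    (F := fun x θ => Real.cos ((n : ℝ) * θ - x * Real.sin θ))
    (F' := fun x θ => Real.sin θ * Real.sin ((n : ℝ) * θ - x * Real.sin θ))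
    (x₀ := x) (a := (0:ℝ)) (b := π) (bound := fun _ => 1) (s := Metric.ball x 1) (μ := volume)
    (Metric.ball_mem_nhds x one_pos)
    (Filter.Eventually.of_forall fun x =>
      ((Real.continuous_cos.comp (by fun_prop)).aestronglyMeasurable))
    ((Real.continuous_cos.comp (by fun_prop) : Continuous _).intervalIntegrable 0 π)
    ((by fun_prop :
      Continuous fun θ : ℝ => Real.sin θ * Real.sin ((n : ℝ) * θ - x * Real.sin θ)).aestronglyMeasurable)
    (Filter.Eventually.of_forall fun θ _ x _ => by
      rw [norm_mul, Real.norm_eq_abs, Real.norm_eq_abs]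
      calc |Real.sin θ| * |Real.sin ((n : ℝ) * θ - x * Real.sin θ)| ≤ 1 * 1 :=
            mul_le_mul (Real.abs_sin_le_one _) (Real.abs_sin_le_one _) (abs_nonneg _)
              zero_le_one
        _ = 1 := mul_one _)
    ((continuous_const : Continuous fun _ : ℝ => (1:ℝ)).intervalIntegrable 0 π)
    (Filter.Eventually.of_forall fun θ _ x _ => by
      have h1 : HasDerivAt (fun x : ℝ => (n : ℝ) * θ - x * Real.sin θ) (-(Real.sin θ)) x :=
        (hasDerivAt_mul_const (Real.sin θ)).const_sub _
      have h2 := h1.cos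
      exact h2.congr_deriv (by ring))
  exact key.2.const_mul (1 / π)

lemma subst_lemma (a r : ℝ) (hr : 0 < r) :
    ∫ y in (0:ℝ)..(π * r),
        (r * Real.sin (y / r)) * Real.sin (2 * r ^ 2 * y - (2 * r ^ 3 - a * r) * Real.sin (y / r))
      = r ^ 2 * ∫ θ in (0:ℝ)..π,
          Real.sin θ * Real.sin (2 * r ^ 3 * θ - (2 * r ^ 3 - a * r) * Real.sin θ) := by
  have h := intervalIntegral.integral_comp_mul_left (a := (0:ℝ)) (b := π)
    (f := fun y => (r * Real.sin (y / r)) *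
      Real.sin (2 * r ^ 2 * y - (2 * r ^ 3 - a * r) * Real.sin (y / r))) (c := r) hr.ne'
  have he : ∀ θ : ℝ, (r * Real.sin (r * θ / r)) *
      Real.sin (2 * r ^ 2 * (r * θ) - (2 * r ^ 3 - a * r) * Real.sin (r * θ / r))
      = r * (Real.sin θ * Real.sin (2 * r ^ 3 * θ - (2 * r ^ 3 - a * r) * Real.sin θ)) := by
    intro θ
    rw [mul_div_cancel_left₀ θ hr.ne']
    ring_nf
  rw [intervalIntegral.integral_congr (g := fun θ : ℝ =>
    r * (Real.sin θ * Real.sin (2 * r ^ 3 * θ - (2 * r ^ 3 - a * r) * Real.sin θ)))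
    (fun θ _ => he θ)] at h
  rw [intervalIntegral.integral_const_mul] at h
  rw [show r * (0:ℝ) = 0 from mul_zero r, show r * π = π * r from mul_comm r π] at h
  rw [smul_eq_mul, eq_comm, inv_mul_eq_iff_eq_mul₀ hr.ne'] at h
  rw [h]
  ring

lemma sin_approx_cubic {t : ℝ} (h0 : 0 ≤ t) (h1 : t ≤ 1) : |Real.sin t - t| ≤ t ^ 3 := by
  have hb := Real.sin_bound (x := t) (by rwa [abs_of_nonneg h0])
  rw [abs_of_nonneg h0] at hb
  have h4 : t ^ 4 ≤ t ^ 3 := by nlinarith [mul_le_mul_of_nonneg_left h1 (pow_nonneg h0 3)]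
  calc |Real.sin t - t| = |(Real.sin t - (t - t ^ 3 / 6)) + (-(t ^ 3 / 6))| := by ring_nf
    _ ≤ |Real.sin t - (t - t ^ 3 / 6)| + |(-(t ^ 3 / 6))| := abs_add_le _ _
    _ ≤ t ^ 5 / 100 + t ^ 3 / 6 := by
        apply add_le_add hb
        rw [abs_neg, abs_of_nonneg (by positivity)]
    _ ≤ t ^ 3 := by nlinarith [h4, pow_nonneg h0 3, mul_le_mul_of_nonneg_left h1 (pow_nonneg h0 4)]

lemma lim1 (y : ℝ) (hy : 0 ≤ y) :
    Tendsto (fun r : ℝ => r * Real.sin (y / r)) atTop (𝓝 y) := by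
  have hsq : Tendsto (fun r : ℝ => (r * Real.sin (y / r)) - y) atTop (𝓝 0) := by
    apply squeeze_zero_norm' (a := fun r : ℝ => y ^ 3 / r ^ 2)
    · filter_upwards [Ici_mem_atTop (max 1 y)] with r hr
      have hr1 : 1 ≤ r := le_trans (le_max_left _ _) hr
      have hry : y ≤ r := le_trans (le_max_right _ _) hr
      have hr0 : 0 < r := lt_of_lt_of_le one_pos hr1
      have ht0 : 0 ≤ y / r := by positivity
      have ht1 : y / r ≤ 1 := by rw [div_le_one hr0]; exact hry
      have hb := sin_approx_cubic ht0 ht1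
      rw [Real.norm_eq_abs]
      have e : r * Real.sin (y / r) - y = r * (Real.sin (y / r) - y / r) := by
        field_simp
      rw [e, abs_mul, abs_of_pos hr0]
      calc r * |Real.sin (y / r) - y / r| ≤ r * (y / r) ^ 3 :=
            mul_le_mul_of_nonneg_left hb hr0.le
        _ = y ^ 3 / r ^ 2 := by field_simp
    · exact Tendsto.div_atTop tendsto_const_nhds (tendsto_pow_atTop two_ne_zero)
  have := hsq.add (tendsto_const_nhds (x := y))
  simpa using this

lemma lim2 (y : ℝ) (hy : 0 ≤ y) :
    Tendsto (fun r : ℝ => 2 * r ^ 3 * (y / r - Real.sin (y / r))) atTop (𝓝 (y ^ 3 / 3)) := by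
  have hsq : Tendsto (fun r : ℝ => 2 * r ^ 3 * (y / r - Real.sin (y / r)) - y ^ 3 / 3)
      atTop (𝓝 0) := by
    apply squeeze_zero_norm' (a := fun r : ℝ => y ^ 4 / r)
    · filter_upwards [Ici_mem_atTop (max 1 y)] with r hr
      have hr1 : 1 ≤ r := le_trans (le_max_left _ _) hr
      have hry : y ≤ r := le_trans (le_max_right _ _) hr
      have hr0 : 0 < r := lt_of_lt_of_le one_pos hr1
      have ht0 : 0 ≤ y / r := by positivity
      have ht1 : y / r ≤ 1 := by rw [div_le_one hr0]; exact hry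
      have hb := Real.sin_bound (x := y / r) (by rwa [abs_of_nonneg ht0])
      rw [abs_of_nonneg ht0] at hb
      rw [Real.norm_eq_abs]
      have hkey : 2 * r ^ 3 * (y / r - Real.sin (y / r)) - y ^ 3 / 3
          = (2 * r ^ 3) * ((y / r - (y / r) ^ 3 / 6) - Real.sin (y / r))
            + (2 * r ^ 3 * (y / r) ^ 3 / 6 - y ^ 3 / 3) := by ring
      have hz : 2 * r ^ 3 * (y / r) ^ 3 / 6 - y ^ 3 / 3 = y ^ 3 / 3 * (1 - 1) := by
        field_simp
        ring
      rw [hkey, hz]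
      simp only [sub_self, mul_zero, add_zero]
      rw [abs_mul, abs_of_pos (by positivity : (0:ℝ) < 2 * r ^ 3)]
      have habs : |y / r - (y / r) ^ 3 / 6 - Real.sin (y / r)| ≤ (y / r) ^ 4 * (5 / 96) := by
        rw [abs_sub_comm, show y / r - (y / r) ^ 3 / 6 = y / r - (y / r) ^ 3 / 6 from rfl]
        refine hb.trans ?_
        nlinarith [mul_le_mul_of_nonneg_left ht1 (pow_nonneg ht0 4), pow_nonneg ht0 4]
      calc 2 * r ^ 3 * |y / r - (y / r) ^ 3 / 6 - Real.sin (y / r)|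
          ≤ 2 * r ^ 3 * ((y / r) ^ 4 * (5 / 96)) :=
            mul_le_mul_of_nonneg_left habs (by positivity)
        _ = (5 / 48) * (y ^ 4 / r) := by field_simp; ring
        _ ≤ y ^ 4 / r := by
            have : (0:ℝ) ≤ y ^ 4 / r := by positivity
            nlinarith
    · exact Tendsto.div_atTop tendsto_const_nhds tendsto_id
  have := hsq.add (tendsto_const_nhds (x := y ^ 3 / 3))
  simpa using this

lemma ptwise_lim (a y : ℝ) (hy : 0 ≤ y) (r : ℕ → ℝ) (hr : Tendsto r atTop atTop) :
    Tendsto (fun n => (r n * Real.sin (y / r n)) *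
        Real.sin (2 * (r n) ^ 2 * y - (2 * (r n) ^ 3 - a * (r n)) * Real.sin (y / r n)))
      atTop (𝓝 (y * Real.sin (a * y + y ^ 3 / 3))) := by
  have h1 : Tendsto (fun n => r n * Real.sin (y / r n)) atTop (𝓝 y) := (lim1 y hy).comp hr
  have h2 : Tendsto (fun n => 2 * (r n) ^ 3 * (y / r n - Real.sin (y / r n)))
      atTop (𝓝 (y ^ 3 / 3)) := (lim2 y hy).comp hr
  have h3 : Tendsto (fun n => a * (r n * Real.sin (y / r n))) atTop (𝓝 (a * y)) :=
    h1.const_mul a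
  have hphase : Tendsto (fun n => 2 * (r n) ^ 2 * y - (2 * (r n) ^ 3 - a * (r n)) * Real.sin (y / r n))
      atTop (𝓝 (a * y + y ^ 3 / 3)) := by
    have hev : (fun n => 2 * (r n) ^ 2 * y - (2 * (r n) ^ 3 - a * (r n)) * Real.sin (y / r n))
        =ᶠ[atTop] (fun n =>
          2 * (r n) ^ 3 * (y / r n - Real.sin (y / r n)) + a * (r n * Real.sin (y / r n))) := by
      filter_upwards [hr.eventually_ge_atTop 1] with n hn
      have hrn : (0:ℝ) < r n := lt_of_lt_of_le one_pos hn
      field_simp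
      ring
    have := h2.add h3
    rw [show y ^ 3 / 3 + a * y = a * y + y ^ 3 / 3 by ring] at this
    exact Tendsto.congr' hev.symm this
  have hsin : Tendsto (fun n => Real.sin (2 * (r n) ^ 2 * y
      - (2 * (r n) ^ 3 - a * (r n)) * Real.sin (y / r n)))
      atTop (𝓝 (Real.sin (a * y + y ^ 3 / 3))) :=
    (Real.continuous_sin.continuousAt.tendsto).comp hphase
  exact h1.mul hsin

noncomputable def rr (n : ℕ) : ℝ := ((n : ℝ) / 2) ^ ((1:ℝ)/3)

lemma rr_tendsto : Tendsto rr atTop atTop := by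
  apply (tendsto_rpow_atTop (by norm_num : (0:ℝ) < 1/3)).comp
  exact (tendsto_natCast_atTop_atTop (R := ℝ)).atTop_div_const two_pos

lemma rr_cube (n : ℕ) : rr n ^ 3 = (n : ℝ) / 2 := by
  rw [rr, ← Real.rpow_natCast (((n:ℝ)/2) ^ ((1:ℝ)/3)) 3, ← Real.rpow_mul (by positivity)]
  norm_num

lemma rr_sq (n : ℕ) : rr n ^ 2 = ((n : ℝ) / 2) ^ ((2:ℝ)/3) := by
  rw [rr, ← Real.rpow_natCast (((n:ℝ)/2) ^ ((1:ℝ)/3)) 2, ← Real.rpow_mul (by positivity)]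
  norm_num

lemma rr_pos {n : ℕ} (hn : 1 ≤ n) : 0 < rr n := by
  apply Real.rpow_pos_of_pos
  have : (1:ℝ) ≤ (n:ℝ) := by exact_mod_cast hn
  linarith

lemma besl_cont (a r : ℝ) : Continuous (fun y : ℝ => (r * Real.sin (y / r)) *
    Real.sin (2 * r ^ 2 * y - (2 * r ^ 3 - a * r) * Real.sin (y / r))) := by
  fun_prop

lemma finite_part (a Y : ℝ) (hY : 0 ≤ Y) :
    Tendsto (fun n : ℕ => ∫ y in (0:ℝ)..Y, (rr n * Real.sin (y / rr n)) *
        Real.sin (2 * (rr n) ^ 2 * y - (2 * (rr n) ^ 3 - a * (rr n)) * Real.sin (y / rr n)))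
      atTop (𝓝 (∫ y in (0:ℝ)..Y, y * Real.sin (a * y + y ^ 3 / 3))) := by
  apply intervalIntegral.tendsto_integral_filter_of_dominated_convergence (bound := fun y => |y|)
  · exact Filter.Eventually.of_forall fun n => (besl_cont a (rr n)).aestronglyMeasurable
  · filter_upwards [eventually_ge_atTop 1] with n hn
    refine Filter.Eventually.of_forall fun y _ => ?_
    have hrn : 0 < rr n := rr_pos hn
    rw [Real.norm_eq_abs, abs_mul]
    calc |rr n * Real.sin (y / rr n)| *
          |Real.sin (2 * rr n ^ 2 * y - (2 * rr n ^ 3 - a * rr n) * Real.sin (y / rr n))|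
        ≤ |rr n * Real.sin (y / rr n)| * 1 :=
          mul_le_mul_of_nonneg_left (Real.abs_sin_le_one _) (abs_nonneg _)
      _ = |rr n| * |Real.sin (y / rr n)| := by rw [mul_one, abs_mul]
      _ ≤ |rr n| * |y / rr n| :=
          mul_le_mul_of_nonneg_left Real.abs_sin_le_abs (abs_nonneg _)
      _ = |y| := by
          rw [abs_div, ← mul_div_assoc, mul_comm,  mul_div_assoc,
            div_self (abs_ne_zero.mpr hrn.ne'), mul_one]
  · exact continuous_abs.intervalIntegrable 0 Y
  · refine Filter.Eventually.of_forall fun y hy => ?_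
    have hy0 : 0 ≤ y := by
      rcases (uIoc_of_le hY ▸ hy : y ∈ Ioc 0 Y) with ⟨h1, _⟩
      exact h1.le
    exact ptwise_lim a y hy0 rr rr_tendsto

/-- If `Ai` is the Airy function and `J n` is the Bessel function of the
first kind of integer order `n` (defined by Bessel's integral), then for every fixed
`a : ℝ`, `(n/2)^(2/3) * (d/dx) J_n(x) |_{x = n - a (n/2)^(1/3)} → -Ai'(a)` as `n → ∞`. -/
theorem bessel_deriv_airy_limit
    (Ai : ℝ → ℝ)
    (hAi : ∀ z : ℝ, Tendsto (fun R : ℝ => ∫ y in (0:ℝ)..R, Real.cos (z * y + y ^ 3 / 3))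
      atTop (nhds (π * Ai z)))
    (J : ℕ → ℝ → ℝ)
    (hJ : ∀ (n : ℕ) (x : ℝ),
      J n x = (1 / π) * ∫ θ in (0:ℝ)..π, Real.cos ((n : ℝ) * θ - x * Real.sin θ))
    (a : ℝ) :
    Tendsto (fun n : ℕ =>
        ((n : ℝ) / 2) ^ ((2:ℝ)/3) * deriv (J n) ((n : ℝ) - a * ((n : ℝ) / 2) ^ ((1:ℝ)/3)))
      atTop (nhds (-(deriv Ai a))) := by
  have hπ := Real.pi_pos
  have hπ3 := Real.pi_gt_three
  -- Step 1 : the main integral limit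
  have claim1 : Tendsto (fun n : ℕ => ∫ y in (0:ℝ)..(π * rr n),
      (rr n * Real.sin (y / rr n)) *
        Real.sin (2 * (rr n) ^ 2 * y - (2 * (rr n) ^ 3 - a * (rr n)) * Real.sin (y / rr n)))
      atTop (𝓝 (Lfun a)) := by
    rw [Metric.tendsto_atTop]
    intro ε hε
    set Ca : ℝ := 3 * π ^ 2 / 2 + (2 + |a|) * π ^ 4 / 4 with hCa
    set C : ℝ := Ca + 14 with hC
    have hCa0 : 0 < Ca := by positivity
    have hC0 : 0 < C := by positivity
    set Y : ℝ := max (π * (|a| + 1)) (2 * C / ε + 1) with hYdef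
    have hY1 : 1 ≤ Y := by
      have : π * (|a| + 1) ≤ Y := le_max_left _ _
      nlinarith [abs_nonneg a]
    have hY0 : 0 < Y := lt_of_lt_of_le one_pos hY1
    have hYa : π ^ 2 * |a| ≤ 2 * Y ^ 2 := by
      have h1 : π * (|a| + 1) ≤ Y := le_max_left _ _
      have hpos : 0 ≤ π * (|a| + 1) := by positivity
      have h2 : (π * (|a| + 1)) ^ 2 ≤ Y ^ 2 := pow_le_pow_left₀ hpos h1 2
      have h3 : (π * (|a| + 1)) ^ 2 = π ^ 2 * (|a| + 1) ^ 2 := by ring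
      have h4 : π ^ 2 * |a| ≤ π ^ 2 * (|a| + 1) ^ 2 :=
        mul_le_mul_of_nonneg_left (by nlinarith [abs_nonneg a]) (sq_nonneg π)
      nlinarith
    have hY2a : 2 * |a| ≤ Y ^ 2 := by
      have h1 : π * (|a| + 1) ≤ Y := le_max_left _ _
      nlinarith [abs_nonneg a]
    have hYC : C / Y < ε / 2 := by
      have h1 : 2 * C / ε + 1 ≤ Y := le_max_right _ _
      rw [div_lt_div_iff₀ hY0 two_pos]
      have h2 : ε * (2 * C / ε + 1) ≤ ε * Y := mul_le_mul_of_nonneg_left h1 hε.le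
      have h3 : ε * (2 * C / ε + 1) = 2 * C + ε := by field_simp
      nlinarith
    -- finite part convergence
    have hfin := finite_part a Y hY0.le
    rw [Metric.tendsto_atTop] at hfin
    obtain ⟨N₁, hN₁⟩ := hfin (ε / 2 - C / Y) (by linarith)
    have hev : ∀ᶠ n : ℕ in atTop, 1 ≤ rr n ∧ Y / π ≤ rr n := by
      filter_upwards [rr_tendsto.eventually_ge_atTop 1, rr_tendsto.eventually_ge_atTop (Y / π)]
        with n h1 h2
      exact ⟨h1, h2⟩
    rw [eventually_atTop] at hev
    obtain ⟨N₂, hN₂⟩ := hev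
    refine ⟨max N₁ N₂, fun n hn => ?_⟩
    have hn₁ : N₁ ≤ n := le_trans (le_max_left _ _) hn
    have hn₂ : N₂ ≤ n := le_trans (le_max_right _ _) hn
    obtain ⟨hr1, hrY⟩ := hN₂ n hn₂
    have hr0 : 0 < rr n := lt_of_lt_of_le one_pos hr1
    have hYπr : Y ≤ π * rr n := by
      rw [div_le_iff₀ hπ] at hrY
      linarith [hrY]
    -- split the integral
    set f : ℝ → ℝ := fun y => (rr n * Real.sin (y / rr n)) *
        Real.sin (2 * (rr n) ^ 2 * y - (2 * (rr n) ^ 3 - a * (rr n)) * Real.sin (y / rr n))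
      with hfdef
    have hintf : ∀ u v : ℝ, IntervalIntegrable f volume u v :=
      fun u v => (besl_cont a (rr n)).intervalIntegrable u v
    have hsplit : (∫ y in (0:ℝ)..Y, f y) + (∫ y in Y..(π * rr n), f y)
        = ∫ y in (0:ℝ)..(π * rr n), f y :=
      intervalIntegral.integral_add_adjacent_intervals (hintf 0 Y) (hintf Y (π * rr n))
    have htail : |∫ y in Y..(π * rr n), f y| ≤ Ca / Y :=
      bessel_tail a (rr n) Y hr1 hY1 hYa hYπr
    have hairy : |Phi Y a - Lfun a| ≤ 14 / Y :=
      Lfun_bound |a| a Y le_rfl hY1 hY2a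
    have hfinn := hN₁ n hn₁
    rw [Real.dist_eq] at hfinn ⊢
    have hPhiY : (∫ y in (0:ℝ)..Y, y * Real.sin (a * y + y ^ 3 / 3)) = Phi Y a := rfl
    rw [hPhiY] at hfinn
    have hbound : |(∫ y in (0:ℝ)..(π * rr n), f y) - Lfun a|
        ≤ |(∫ y in (0:ℝ)..Y, f y) - Phi Y a| + |∫ y in Y..(π * rr n), f y|
          + |Phi Y a - Lfun a| := by
      have e : (∫ y in (0:ℝ)..(π * rr n), f y) - Lfun a
          = ((∫ y in (0:ℝ)..Y, f y) - Phi Y a) + (∫ y in Y..(π * rr n), f y)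
            + (Phi Y a - Lfun a) := by
        rw [← hsplit]; ring
      rw [e]
      calc |_ + _ + _| ≤ |_ + _| + |Phi Y a - Lfun a| := abs_add_le _ _
        _ ≤ |(∫ y in (0:ℝ)..Y, f y) - Phi Y a| + |∫ y in Y..(π * rr n), f y|
            + |Phi Y a - Lfun a| := by
            gcongr
            exact abs_add_le _ _
    calc |(∫ y in (0:ℝ)..(π * rr n), f y) - Lfun a|
        ≤ |(∫ y in (0:ℝ)..Y, f y) - Phi Y a| + |∫ y in Y..(π * rr n), f y|
          + |Phi Y a - Lfun a| := hbound
      _ < (ε / 2 - C / Y) + Ca / Y + 14 / Y := by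
          apply add_lt_add_of_lt_of_le (add_lt_add_of_lt_of_le hfinn htail) hairy
      _ = ε / 2 - C / Y + C / Y := by rw [hC]; ring
      _ = ε / 2 := by ring
      _ < ε := by linarith
  -- Step 2 : rewrite the sequence
  have hAiry := airy_hasDeriv Ai hAi a
  have hderivAi : deriv Ai a = -(Lfun a) / π := hAiry.deriv
  have hgoalval : -(deriv Ai a) = (1 / π) * Lfun a := by
    rw [hderivAi]; field_simp
  rw [hgoalval]
  have hcongr : ∀ᶠ n : ℕ in atTop,
      (1 / π) * (∫ y in (0:ℝ)..(π * rr n),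
        (rr n * Real.sin (y / rr n)) *
          Real.sin (2 * (rr n) ^ 2 * y - (2 * (rr n) ^ 3 - a * (rr n)) * Real.sin (y / rr n)))
      = ((n : ℝ) / 2) ^ ((2:ℝ)/3) * deriv (J n) ((n : ℝ) - a * ((n : ℝ) / 2) ^ ((1:ℝ)/3)) := by
    filter_upwards [eventually_ge_atTop 1] with n hn
    have hr0 : 0 < rr n := rr_pos hn
    have hn2 : (n : ℝ) = 2 * rr n ^ 3 := by rw [rr_cube]; ring
    set x : ℝ := (n : ℝ) - a * ((n : ℝ) / 2) ^ ((1:ℝ)/3) with hxdef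
    have hx : x = 2 * rr n ^ 3 - a * rr n := by
      rw [hxdef, ← hn2]; rfl
    have hJfun : J n = fun x : ℝ =>
        (1 / π) * ∫ θ in (0:ℝ)..π, Real.cos ((n : ℝ) * θ - x * Real.sin θ) :=
      funext (hJ n)
    have hd : deriv (J n) x
        = (1 / π) * ∫ θ in (0:ℝ)..π, Real.sin θ * Real.sin ((n : ℝ) * θ - x * Real.sin θ) := by
      rw [hJfun]
      exact (J_hasDeriv n x).deriv
    rw [hd]
    have hintrw : (∫ θ in (0:ℝ)..π, Real.sin θ * Real.sin ((n : ℝ) * θ - x * Real.sin θ))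
        = ∫ θ in (0:ℝ)..π, Real.sin θ *
            Real.sin (2 * rr n ^ 3 * θ - (2 * rr n ^ 3 - a * rr n) * Real.sin θ) := by
      rw [hn2, hx]
    rw [hintrw, subst_lemma a (rr n) hr0, ← rr_sq]
    ring
  have := (claim1.const_mul (1 / π)).congr' hcongr
  simpa using this
end

section
/- For every z ∈ ℝ, the improper integral defining the Scorer function converges: the limit lim_{R→∞} ∫₀^R sin(zy + y³/3) dy exists (as a finite real number). -/
open Real Filter MeasureTheory intervalIntegral

/-- For every `z : ℝ`, the improper integral defining the Scorer function
converges: `lim_{R→∞} ∫₀^R sin (z y + y³/3) dy` exists as a finite real number. -/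
theorem scorer_integral_converges (z : ℝ) :
    ∃ L : ℝ, Tendsto (fun R : ℝ => ∫ y in (0:ℝ)..R, Real.sin (z * y + y ^ 3 / 3))
      atTop (nhds L) := by
  set a : ℝ := 1 + Real.sqrt (2 * |z|) with ha_def
  have hs : 0 ≤ Real.sqrt (2 * |z|) := Real.sqrt_nonneg _
  have ha1 : (1:ℝ) ≤ a := by simp only [ha_def]; linarith
  have ha0 : (0:ℝ) < a := by linarith
  have haz : 2 * |z| ≤ a ^ 2 := by
    have h1 : Real.sqrt (2 * |z|) ^ 2 = 2 * |z| := Real.sq_sqrt (by positivity)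
    nlinarith [hs]
  have hlow : ∀ y : ℝ, a ≤ y → y ^ 2 / 2 ≤ z + y ^ 2 := by
    intro y hy
    have h2 : a ^ 2 ≤ y ^ 2 := by nlinarith
    have hz : -|z| ≤ z := neg_abs_le z
    nlinarith
  have hpos : ∀ y : ℝ, a ≤ y → 0 < z + y ^ 2 := by
    intro y hy
    have h1 : (1:ℝ) ≤ y := le_trans ha1 hy
    have := hlow y hy
    nlinarith
  set f : ℝ → ℝ := fun y => Real.sin (z * y + y ^ 3 / 3) with hf_def
  set h : ℝ → ℝ := fun y => Real.cos (z * y + y ^ 3 / 3) * (2 * y) / (z + y ^ 2) ^ 2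
    with hh_def
  set F : ℝ → ℝ := fun y => -Real.cos (z * y + y ^ 3 / 3) / (z + y ^ 2) with hF_def
  -- continuity facts
  have hφc : Continuous (fun y : ℝ => z * y + y ^ 3 / 3) := by fun_prop
  have hfc : Continuous f := Real.continuous_sin.comp hφc
  have hhc : ContinuousOn h (Set.Ici a) := by
    apply ContinuousOn.div
    · exact ((Real.continuous_cos.comp hφc).mul (by fun_prop)).continuousOn
    · fun_prop
    · intro y hy
      exact pow_ne_zero 2 (hpos y hy).ne'
  -- derivative of F
  have hderiv : ∀ y : ℝ, a ≤ y → HasDerivAt F (f y + h y) y := by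
    intro y hy
    have hv := (hpos y hy).ne'
    have hφ' : HasDerivAt (fun y : ℝ => z * y + y ^ 3 / 3) (z + y ^ 2) y := by
      have h1 : HasDerivAt (fun y : ℝ => z * y) z y := by
        simpa using (hasDerivAt_id y).const_mul z
      have h2 : HasDerivAt (fun y : ℝ => y ^ 3 / 3) (y ^ 2) y := by
        have := (hasDerivAt_pow 3 y).div_const 3
        norm_num at this
        exact this
      exact h1.add h2
    have hu : HasDerivAt (fun y : ℝ => -Real.cos (z * y + y ^ 3 / 3))
        (Real.sin (z * y + y ^ 3 / 3) * (z + y ^ 2)) y := by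
      have := (Real.hasDerivAt_cos (z * y + y ^ 3 / 3)).comp y hφ'
      have h' := this.neg
      simp only [neg_neg, neg_mul] at h'
      exact h'
    have hd : HasDerivAt (fun y : ℝ => z + y ^ 2) (2 * y) y := by
      have := (hasDerivAt_pow 2 y).const_add z
      norm_num at this
      simpa using this
    have hdiv := hu.div hd hv
    refine hdiv.congr_deriv ?_
    symm
    simp only [hf_def, hh_def]
    field_simp
    ring
  -- integrability of h on Ioi a
  have hint : IntegrableOn h (Set.Ioi a) := by
    have hmeas : AEStronglyMeasurable h (volume.restrict (Set.Ioi a)) :=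
      (hhc.mono Set.Ioi_subset_Ici_self).aestronglyMeasurable measurableSet_Ioi
    refine Integrable.mono'
      ((integrableOn_Ioi_rpow_of_lt (by norm_num : (-3:ℝ) < -1) ha0).const_mul 8) hmeas ?_
    filter_upwards [ae_restrict_mem measurableSet_Ioi] with y hy
    have hya : a ≤ y := le_of_lt hy
    have hy1 : (1:ℝ) ≤ y := le_trans ha1 hya
    have hy0 : (0:ℝ) < y := by linarith
    have hp := hpos y hya
    have hl := hlow y hya
    have hb : |h y| ≤ 2 * y / (y ^ 2 / 2) ^ 2 := by
      rw [hh_def]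
      simp only
      rw [abs_div, abs_mul]
      apply div_le_div₀ (by positivity)
      · calc |Real.cos (z * y + y ^ 3 / 3)| * |2 * y| ≤ 1 * |2 * y| := by
              apply mul_le_mul_of_nonneg_right (Real.abs_cos_le_one _) (abs_nonneg _)
          _ = 2 * y := by rw [one_mul, abs_of_pos (by linarith)]
      · positivity
      · rw [abs_of_pos (by positivity)]
        apply pow_le_pow_left₀ (by positivity) hl
    have heq : 8 * y ^ (-3 : ℝ) = 2 * y / (y ^ 2 / 2) ^ 2 := by
      rw [Real.rpow_neg hy0.le]
      rw [show ((3:ℝ) = ((3:ℕ):ℝ)) by norm_num, Real.rpow_natCast]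
      field_simp
      ring
    calc ‖h y‖ = |h y| := rfl
      _ ≤ 2 * y / (y ^ 2 / 2) ^ 2 := hb
      _ = 8 * y ^ (-3 : ℝ) := heq.symm
  -- key formula for R ≥ a
  have hfint : ∀ b c : ℝ, IntervalIntegrable f volume b c := fun b c =>
    hfc.intervalIntegrable b c
  have key : ∀ R : ℝ, a ≤ R → (∫ y in (0:ℝ)..R, f y) =
      (∫ y in (0:ℝ)..a, f y) + ((F R - F a) - ∫ y in a..R, h y) := by
    intro R hR
    have huIcc : Set.uIcc a R = Set.Icc a R := Set.uIcc_of_le hR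
    have hsub : Set.uIcc a R ⊆ Set.Ici a := by
      rw [huIcc]; exact Set.Icc_subset_Ici_self
    have hIIh : IntervalIntegrable h volume a R :=
      (hhc.mono hsub).intervalIntegrable
    have hIIfh : IntervalIntegrable (fun y => f y + h y) volume a R :=
      ((hfc.continuousOn.mono (Set.subset_univ _)).add (hhc.mono hsub)).intervalIntegrable
    have hftc : (∫ y in a..R, (f y + h y)) = F R - F a :=
      integral_eq_sub_of_hasDerivAt (fun y hy => hderiv y (hsub hy).out) hIIfh
    have h2 : (∫ y in a..R, f y) = (F R - F a) - ∫ y in a..R, h y := by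
      rw [← hftc, integral_add (hfint a R) hIIh]; ring
    rw [← integral_add_adjacent_intervals (hfint 0 a) (hfint a R), h2]
  -- limits
  have hFR : Tendsto F atTop (nhds 0) := by
    have hb : ∀ᶠ R in atTop, |F R| ≤ 2 / R ^ 2 := by
      filter_upwards [eventually_ge_atTop a] with R hR
      have hp := hpos R hR
      have hl := hlow R hR
      have h1 : (1:ℝ) ≤ R := le_trans ha1 hR
      have hFabs : |F R| = |Real.cos (z * R + R ^ 3 / 3)| / (z + R ^ 2) := by
        rw [hF_def]
        simp only
        rw [abs_div, abs_neg, abs_of_pos hp]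
      rw [hFabs]
      calc |Real.cos (z * R + R ^ 3 / 3)| / (z + R ^ 2) ≤ 1 / (z + R ^ 2) := by
            gcongr
            exact Real.abs_cos_le_one _
        _ ≤ 1 / (R ^ 2 / 2) := by
            apply one_div_le_one_div_of_le (by positivity) hl
        _ = 2 / R ^ 2 := by field_simp
    have htend2 : Tendsto (fun R : ℝ => 2 / R ^ 2) atTop (nhds 0) :=
      tendsto_const_nhds.div_atTop (tendsto_pow_atTop two_ne_zero)
    have h0 : ∀ᶠ R in atTop, 0 ≤ |F R| := Eventually.of_forall fun R => abs_nonneg _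
    have habs := squeeze_zero' h0 hb htend2
    rwa [tendsto_zero_iff_abs_tendsto_zero]
  have htend : Tendsto (fun R : ℝ => 2 / R ^ 2) atTop (nhds 0) :=
    tendsto_const_nhds.div_atTop (tendsto_pow_atTop two_ne_zero)
  have hHR : Tendsto (fun R : ℝ => ∫ y in a..R, h y) atTop
      (nhds (∫ y in Set.Ioi a, h y)) :=
    intervalIntegral_tendsto_integral_Ioi a hint tendsto_id
  refine ⟨(∫ y in (0:ℝ)..a, f y) + ((0 - F a) - ∫ y in Set.Ioi a, h y), ?_⟩
  have hT : Tendsto (fun R : ℝ =>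
      (∫ y in (0:ℝ)..a, f y) + ((F R - F a) - ∫ y in a..R, h y)) atTop
      (nhds ((∫ y in (0:ℝ)..a, f y) + ((0 - F a) - ∫ y in Set.Ioi a, h y))) :=
    tendsto_const_nhds.add ((hFR.sub tendsto_const_nhds).sub hHR)
  exact hT.congr' (by
    filter_upwards [eventually_ge_atTop a] with R hR
    exact (key R hR).symm)
end

section
/- The Airy function Ai(z) = (1/π) · lim_{R→∞} ∫₀^R cos(zy + y³/3) dy is differentiable on ℝ, and its derivative is given by differentiating under the integral sign: for every z ∈ ℝ, Ai'(z) = −(1/π) · lim_{R→∞} ∫₀^R y · sin(zy + y³/3) dy, with this limit existing. -/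
open Real Filter MeasureTheory intervalIntegral Set

private lemma airy_cont (z : ℝ) :
    Continuous fun y : ℝ => y * Real.sin (z * y + y ^ 3 / 3) := by fun_prop

private lemma airy_phase_deriv (z y : ℝ) :
    HasDerivAt (fun y : ℝ => z * y + y ^ 3 / 3) (z + y ^ 2) y := by
  have h1 : HasDerivAt (fun y : ℝ => z * y) z y := by
    simpa using (hasDerivAt_id y).const_mul z
  have h2 : HasDerivAt (fun y : ℝ => y ^ 3 / 3) (y ^ 2) y := by
    have := (hasDerivAt_pow 3 y).div_const 3
    refine this.congr_deriv ?_
    ring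
  exact h1.add h2

set_option maxHeartbeats 1000000 in
/-- Key tail estimate via integration by parts. -/
private lemma airy_est {M z R₁ R₂ : ℝ} (hz : |z| ≤ M) (hR₁ : 1 + 2 * M ≤ R₁)
    (h12 : R₁ ≤ R₂) :
    |∫ y in R₁..R₂, y * Real.sin (z * y + y ^ 3 / 3)| ≤ 10 / R₁ := by
  have hM : 0 ≤ M := (abs_nonneg z).trans hz
  have hR₁1 : (1:ℝ) ≤ R₁ := by linarith
  have hR₁0 : (0:ℝ) < R₁ := by linarith
  have hy1 : ∀ y : ℝ, R₁ ≤ y → 1 ≤ y := fun y hy => le_trans hR₁1 hy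
  have hyM : ∀ y : ℝ, R₁ ≤ y → M ≤ y ^ 2 / 2 := by
    intro y hy
    have h1 : (1:ℝ) ≤ y := hy1 y hy
    nlinarith
  have hden : ∀ y : ℝ, R₁ ≤ y → y ^ 2 / 2 ≤ z + y ^ 2 := by
    intro y hy
    have h1 := hyM y hy
    have h2 := neg_abs_le z
    linarith
  have hdenpos : ∀ y : ℝ, R₁ ≤ y → 0 < z + y ^ 2 := by
    intro y hy
    have h1 := hy1 y hy
    have h2 := hden y hy
    nlinarith
  set u : ℝ → ℝ := fun y => y / (z + y ^ 2) with hu_def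
  set u' : ℝ → ℝ := fun y => (z - y ^ 2) / (z + y ^ 2) ^ 2 with hu'_def
  set v : ℝ → ℝ := fun y => Real.cos (z * y + y ^ 3 / 3) with hv_def
  set v' : ℝ → ℝ := fun y => -Real.sin (z * y + y ^ 3 / 3) * (z + y ^ 2) with hv'_def
  have hmem : ∀ y ∈ Set.uIcc R₁ R₂, R₁ ≤ y := by
    intro y hy
    rw [uIcc_of_le h12] at hy
    exact hy.1
  have hu : ∀ y ∈ Set.uIcc R₁ R₂, HasDerivAt u (u' y) y := by
    intro y hy
    have hne : z + y ^ 2 ≠ 0 := (hdenpos y (hmem y hy)).ne'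
    have hd : HasDerivAt (fun y : ℝ => z + y ^ 2) (2 * y) y := by
      have := (hasDerivAt_pow 2 y).const_add z
      refine this.congr_deriv ?_
      ring
    have h := (hasDerivAt_id y).div hd hne
    refine h.congr_deriv ?_
    simp only [hu'_def, id]
    field_simp [hne]
    ring
  have hv : ∀ y ∈ Set.uIcc R₁ R₂, HasDerivAt v (v' y) y := fun y _ =>
    (airy_phase_deriv z y).cos
  have hu'int : IntervalIntegrable u' volume R₁ R₂ := by
    apply ContinuousOn.intervalIntegrable
    apply ContinuousOn.div (by fun_prop) (by fun_prop)
    intro y hy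
    exact pow_ne_zero 2 (hdenpos y (hmem y hy)).ne'
  have hv'int : IntervalIntegrable v' volume R₁ R₂ := by
    apply Continuous.intervalIntegrable
    fun_prop
  have hIBP := intervalIntegral.integral_mul_deriv_eq_deriv_mul hu hv hu'int hv'int
  have heq : EqOn (fun y => u y * v' y)
      (fun y => -(y * Real.sin (z * y + y ^ 3 / 3))) (Set.uIcc R₁ R₂) := by
    intro y hy
    have hne : z + y ^ 2 ≠ 0 := (hdenpos y (hmem y hy)).ne'
    simp only [hu_def, hv'_def]
    field_simp [hne]
  have h1 : (∫ y in R₁..R₂, u y * v' y)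
      = -∫ y in R₁..R₂, y * Real.sin (z * y + y ^ 3 / 3) := by
    rw [← intervalIntegral.integral_neg]
    exact intervalIntegral.integral_congr heq
  -- bound the boundary terms
  have hub : ∀ y : ℝ, R₁ ≤ y → |u y| ≤ 2 / R₁ := by
    intro y hy
    have h1y := hy1 y hy
    have hd := hden y hy
    have hp := hdenpos y hy
    have hy0 : (0:ℝ) < y := by linarith
    have h2 : |u y| = y / (z + y ^ 2) := by
      simp only [hu_def]
      rw [abs_div, abs_of_pos hy0, abs_of_pos hp]
    rw [h2]
    calc y / (z + y ^ 2) ≤ y / (y ^ 2 / 2) :=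
          div_le_div_of_nonneg_left (le_of_lt hy0) (by positivity) hd
      _ = 2 / y := by field_simp
      _ ≤ 2 / R₁ := div_le_div_of_nonneg_left (by norm_num) hR₁0 hy
  -- pointwise bound for the integral term
  have hu'bd : ∀ y : ℝ, y ∈ Set.uIoc R₁ R₂ → ‖u' y * v y‖ ≤ 6 / y ^ 2 := by
    intro y hy
    rw [uIoc_of_le h12] at hy
    have hyR : R₁ ≤ y := le_of_lt hy.1
    have h1y := hy1 y hyR
    have hd := hden y hyR
    have hp := hdenpos y hyR
    have hMy := hyM y hyR
    have hy0 : (0:ℝ) < y := by linarith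
    have hv1 : |v y| ≤ 1 := by
      simp only [hv_def]
      exact Real.abs_cos_le_one _
    have hu'abs : |u' y| = |z - y ^ 2| / (z + y ^ 2) ^ 2 := by
      simp only [hu'_def]
      rw [abs_div, abs_of_pos (by positivity : (0:ℝ) < (z + y ^ 2) ^ 2)]
    have hnum : |z - y ^ 2| ≤ 3 / 2 * y ^ 2 := by
      rw [abs_le]
      constructor
      · have := neg_abs_le z
        nlinarith
      · have := le_abs_self z
        nlinarith
    have hstep : |u' y| ≤ (3 / 2 * y ^ 2) / ((y ^ 2 / 2) ^ 2) := by
      rw [hu'abs]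
      apply div_le_div₀ (by positivity) hnum (by positivity)
      nlinarith
    calc ‖u' y * v y‖ = |u' y| * |v y| := abs_mul _ _
      _ ≤ ((3 / 2 * y ^ 2) / ((y ^ 2 / 2) ^ 2)) * 1 :=
          mul_le_mul hstep hv1 (abs_nonneg _) (by positivity)
      _ = 6 / y ^ 2 := by field_simp; ring
  -- compute the dominating integral
  have hanti : ∀ y ∈ Set.uIcc R₁ R₂, HasDerivAt (fun y : ℝ => -6 / y) (6 / y ^ 2) y := by
    intro y hy
    have hy0 : y ≠ 0 := by
      have := hy1 y (hmem y hy); intro h; rw [h] at this; linarith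
    have := (hasDerivAt_inv hy0).const_mul (-6 : ℝ)
    refine this.congr_deriv ?_
    field_simp
  have hint6 : IntervalIntegrable (fun y : ℝ => 6 / y ^ 2) volume R₁ R₂ := by
    apply ContinuousOn.intervalIntegrable
    apply ContinuousOn.div continuousOn_const (by fun_prop)
    intro y hy
    have : 0 < y := lt_of_lt_of_le hR₁0 (hmem y hy)
    positivity
  have hval : (∫ y in R₁..R₂, 6 / y ^ 2) = -6 / R₂ - -6 / R₁ :=
    intervalIntegral.integral_eq_sub_of_hasDerivAt hanti hint6
  have h2 : ‖∫ y in R₁..R₂, u' y * v y‖ ≤ |∫ y in R₁..R₂, 6 / y ^ 2| := by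
    apply intervalIntegral.norm_integral_le_abs_of_norm_le _ hint6
    exact (ae_restrict_iff' measurableSet_uIoc).2 (Filter.Eventually.of_forall hu'bd)
  have hR₂0 : (0:ℝ) < R₂ := lt_of_lt_of_le hR₁0 h12
  have h3 : |∫ y in R₁..R₂, 6 / y ^ 2| ≤ 6 / R₁ := by
    rw [hval]
    have h6 : (0:ℝ) ≤ 6 / R₂ := by positivity
    have h7 : 6 / R₂ ≤ 6 / R₁ := div_le_div_of_nonneg_left (by norm_num) hR₁0 h12
    rw [abs_of_nonneg (by linarith [neg_div R₂ (6:ℝ), neg_div R₁ (6:ℝ)] : (0:ℝ) ≤ -6 / R₂ - -6 / R₁)]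
    · linarith [neg_div R₂ (6:ℝ), neg_div R₁ (6:ℝ)]
  -- put everything together
  have hIBP' : (∫ y in R₁..R₂, y * Real.sin (z * y + y ^ 3 / 3))
      = -(u R₂ * v R₂) + u R₁ * v R₁ + (∫ y in R₁..R₂, u' y * v y) := by
    rw [h1] at hIBP
    linarith
  have e2 : |u R₂ * v R₂| ≤ 2 / R₁ := by
    rw [abs_mul]
    have ha := hub R₂ h12
    have hb : |v R₂| ≤ 1 := by simp only [hv_def]; exact Real.abs_cos_le_one _
    calc |u R₂| * |v R₂| ≤ (2 / R₁) * 1 :=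
          mul_le_mul ha hb (abs_nonneg _) (by positivity)
      _ = 2 / R₁ := mul_one _
  have e1 : |u R₁ * v R₁| ≤ 2 / R₁ := by
    rw [abs_mul]
    have ha := hub R₁ le_rfl
    have hb : |v R₁| ≤ 1 := by simp only [hv_def]; exact Real.abs_cos_le_one _
    calc |u R₁| * |v R₁| ≤ (2 / R₁) * 1 :=
          mul_le_mul ha hb (abs_nonneg _) (by positivity)
      _ = 2 / R₁ := mul_one _
  have e3 : |∫ y in R₁..R₂, u' y * v y| ≤ 6 / R₁ := by
    have := h2.trans h3
    rwa [Real.norm_eq_abs] at this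
  rw [hIBP']
  have ha := abs_add_le (-(u R₂ * v R₂) + u R₁ * v R₁) (∫ y in R₁..R₂, u' y * v y)
  have hb := abs_add_le (-(u R₂ * v R₂)) (u R₁ * v R₁)
  rw [abs_neg] at hb
  have : (10:ℝ) / R₁ = 2 / R₁ + 2 / R₁ + 6 / R₁ := by ring
  rw [this]
  linarith

/-- Cauchy-type estimate for the partial integrals. -/
private lemma airy_diff_est {M z T R R' : ℝ} (hz : |z| ≤ M) (hT : 1 + 2 * M ≤ T)
    (hR : T ≤ R) (hR' : T ≤ R') :
    |(∫ y in (0:ℝ)..R, y * Real.sin (z * y + y ^ 3 / 3))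
      - ∫ y in (0:ℝ)..R', y * Real.sin (z * y + y ^ 3 / 3)| ≤ 10 / T := by
  have hM : 0 ≤ M := (abs_nonneg z).trans hz
  have hT0 : (0:ℝ) < T := by linarith
  have key : ∀ a b : ℝ, T ≤ a → a ≤ b →
      |(∫ y in (0:ℝ)..b, y * Real.sin (z * y + y ^ 3 / 3))
        - ∫ y in (0:ℝ)..a, y * Real.sin (z * y + y ^ 3 / 3)| ≤ 10 / T := by
    intro a b ha hab
    have hadd := intervalIntegral.integral_add_adjacent_intervals
      ((airy_cont z).intervalIntegrable (μ := volume) 0 a)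
      ((airy_cont z).intervalIntegrable a b)
    have hdiff : (∫ y in (0:ℝ)..b, y * Real.sin (z * y + y ^ 3 / 3))
        - (∫ y in (0:ℝ)..a, y * Real.sin (z * y + y ^ 3 / 3))
        = ∫ y in a..b, y * Real.sin (z * y + y ^ 3 / 3) := by
      linarith [hadd]
    rw [hdiff]
    calc |∫ y in a..b, y * Real.sin (z * y + y ^ 3 / 3)| ≤ 10 / a :=
          airy_est hz (le_trans hT ha) hab
      _ ≤ 10 / T := div_le_div_of_nonneg_left (by norm_num) hT0 ha
  rcases le_total R' R with h | h
  · exact key R' R hR' h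
  · rw [abs_sub_comm]
    exact key R R' hR h

/-- Differentiation under the integral sign for the partial integrals. -/
private lemma airy_hasDerivAt_partial (R z : ℝ) :
    HasDerivAt (fun z : ℝ => ∫ y in (0:ℝ)..R, Real.cos (z * y + y ^ 3 / 3))
      (-(∫ y in (0:ℝ)..R, y * Real.sin (z * y + y ^ 3 / 3))) z := by
  have h := intervalIntegral.hasDerivAt_integral_of_dominated_loc_of_deriv_le
    (F := fun (x : ℝ) (t : ℝ) => Real.cos (x * t + t ^ 3 / 3))
    (F' := fun (x : ℝ) (t : ℝ) => -Real.sin (x * t + t ^ 3 / 3) * t)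
    (x₀ := z) (a := 0) (b := R) (bound := fun t => |t|) (μ := volume) (s := Metric.ball z 1)
    (Metric.ball_mem_nhds z one_pos)
    (Filter.Eventually.of_forall fun x =>
      (Continuous.aestronglyMeasurable (by fun_prop)))
    ((by fun_prop : Continuous fun t : ℝ => Real.cos (z * t + t ^ 3 / 3)).intervalIntegrable 0 R)
    (Continuous.aestronglyMeasurable (by fun_prop))
    (Filter.Eventually.of_forall ?_)
    ((continuous_abs.intervalIntegrable 0 R :
      IntervalIntegrable (fun t : ℝ => |t|) volume 0 R))
    (Filter.Eventually.of_forall ?_)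
  · have heq : (∫ t in (0:ℝ)..R, -Real.sin (z * t + t ^ 3 / 3) * t)
        = -(∫ y in (0:ℝ)..R, y * Real.sin (z * y + y ^ 3 / 3)) := by
      rw [← intervalIntegral.integral_neg]
      apply intervalIntegral.integral_congr
      intro y _
      dsimp
      ring
    rw [heq] at h
    exact h.2
  · intro t _ x _
    rw [norm_mul, norm_neg, Real.norm_eq_abs, Real.norm_eq_abs]
    calc |Real.sin (x * t + t ^ 3 / 3)| * |t| ≤ 1 * |t| :=
          mul_le_mul_of_nonneg_right (Real.abs_sin_le_one _) (abs_nonneg t)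
      _ = |t| := one_mul _
  · intro t _ x _
    have hph : HasDerivAt (fun x : ℝ => x * t + t ^ 3 / 3) t x :=
      (hasDerivAt_mul_const t).add_const _
    exact hph.cos

/-- The Airy function `Ai` (defined by the improper oscillatory integral
`Ai z = (1/π) lim_{R→∞} ∫₀^R cos (z y + y³/3) dy`) is differentiable on `ℝ`, and its
derivative is obtained by differentiating under the integral sign: for every `z`,
`Ai'(z) = -(1/π) lim_{R→∞} ∫₀^R y sin (z y + y³/3) dy`, the limit existing (i.e. the
partial integrals tend to `-π * Ai'(z)`). -/
theorem airy_differentiable_deriv_integral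
    (Ai : ℝ → ℝ)
    (hAi : ∀ z : ℝ, Tendsto (fun R : ℝ => ∫ y in (0:ℝ)..R, Real.cos (z * y + y ^ 3 / 3))
      atTop (nhds (π * Ai z))) :
    Differentiable ℝ Ai ∧
      ∀ z : ℝ, Tendsto (fun R : ℝ => ∫ y in (0:ℝ)..R, y * Real.sin (z * y + y ^ 3 / 3))
        atTop (nhds (-(π * deriv Ai z))) := by
  -- existence of the limit of the differentiated partial integrals
  have hGlim : ∀ z : ℝ, ∃ L : ℝ,
      Tendsto (fun R : ℝ => ∫ y in (0:ℝ)..R, y * Real.sin (z * y + y ^ 3 / 3))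
        atTop (nhds L) := by
    intro z
    apply cauchy_map_iff_exists_tendsto.mp
    rw [Metric.cauchy_iff]
    refine ⟨Filter.map_neBot, fun ε hε => ?_⟩
    set T : ℝ := max (1 + 2 * |z|) (20 / ε) with hT_def
    refine ⟨(fun R : ℝ => ∫ y in (0:ℝ)..R, y * Real.sin (z * y + y ^ 3 / 3)) '' Ici T,
      Filter.image_mem_map (Ici_mem_atTop T), ?_⟩
    rintro x ⟨R, hR, rfl⟩ x' ⟨R', hR', rfl⟩
    rw [Real.dist_eq]
    have h1 := airy_diff_est (le_refl |z|) (le_max_left _ _) hR hR'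
    have hT0 : (0:ℝ) < T :=
      lt_of_lt_of_le (by positivity : (0:ℝ) < 20 / ε) (le_max_right _ _)
    have h2 : 10 / T ≤ 10 / (20 / ε) :=
      div_le_div_of_nonneg_left (by norm_num) (by positivity) (le_max_right _ _)
    have h3 : 10 / (20 / ε) = ε / 2 := by
      rw [div_div_eq_mul_div]
      ring
    linarith
  choose D hD using hGlim
  -- quantitative closeness to the limit
  have hGD : ∀ M z : ℝ, |z| ≤ M → ∀ T : ℝ, 1 + 2 * M ≤ T → ∀ R : ℝ, T ≤ R →
      |(∫ y in (0:ℝ)..R, y * Real.sin (z * y + y ^ 3 / 3)) - D z| ≤ 10 / T := by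
    intro M z hz T hT R hR
    have h1 : Tendsto
        (fun R' : ℝ => |(∫ y in (0:ℝ)..R, y * Real.sin (z * y + y ^ 3 / 3))
          - ∫ y in (0:ℝ)..R', y * Real.sin (z * y + y ^ 3 / 3)|) atTop
        (nhds |(∫ y in (0:ℝ)..R, y * Real.sin (z * y + y ^ 3 / 3)) - D z|) :=
      (Tendsto.sub tendsto_const_nhds (hD z)).abs
    apply le_of_tendsto h1
    filter_upwards [eventually_ge_atTop T] with R' hR'
    exact airy_diff_est hz hT hR hR'
  -- derivative of π • Ai
  have hD' : ∀ z₀ : ℝ, HasDerivAt (fun z => π * Ai z) (-(D z₀)) z₀ := by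
    intro z₀
    have hsopen : IsOpen (Metric.ball z₀ 1) := Metric.isOpen_ball
    have hmem : z₀ ∈ Metric.ball z₀ 1 := Metric.mem_ball_self one_pos
    have hMz : ∀ z ∈ Metric.ball z₀ 1, |z| ≤ |z₀| + 1 := by
      intro z hz
      rw [Metric.mem_ball, Real.dist_eq] at hz
      calc |z| = |z - z₀ + z₀| := by ring_nf
        _ ≤ |z - z₀| + |z₀| := abs_add_le _ _
        _ ≤ |z₀| + 1 := by linarith
    have hunif : TendstoUniformlyOn
        (fun (R : ℝ) (z : ℝ) => -(∫ y in (0:ℝ)..R, y * Real.sin (z * y + y ^ 3 / 3)))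
        (fun z => -(D z)) atTop (Metric.ball z₀ 1) := by
      rw [Metric.tendstoUniformlyOn_iff]
      intro ε hε
      set M : ℝ := |z₀| + 1 with hM_def
      set T : ℝ := max (1 + 2 * M) (20 / ε) with hT_def
      filter_upwards [eventually_ge_atTop T] with R hR z hzs
      rw [Real.dist_eq]
      have heq : -(D z) - -(∫ y in (0:ℝ)..R, y * Real.sin (z * y + y ^ 3 / 3))
          = (∫ y in (0:ℝ)..R, y * Real.sin (z * y + y ^ 3 / 3)) - D z := by ring
      rw [heq]
      have h1 := hGD M z (hMz z hzs) T (le_max_left _ _) R hR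
      have h2 : 10 / T ≤ 10 / (20 / ε) :=
        div_le_div_of_nonneg_left (by norm_num) (by positivity) (le_max_right _ _)
      have h3 : 10 / (20 / ε) = ε / 2 := by
        rw [div_div_eq_mul_div]
        ring
      linarith
    have hfd : ∀ᶠ R in (atTop : Filter ℝ), ∀ z ∈ Metric.ball z₀ 1,
        HasDerivAt (fun z : ℝ => ∫ y in (0:ℝ)..R, Real.cos (z * y + y ^ 3 / 3))
          (-(∫ y in (0:ℝ)..R, y * Real.sin (z * y + y ^ 3 / 3))) z :=
      Filter.Eventually.of_forall fun R z _ => airy_hasDerivAt_partial R z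
    exact hasDerivAt_of_tendstoUniformlyOn hsopen hunif hfd (fun z _ => hAi z) hmem
  have hAid : ∀ z : ℝ, HasDerivAt Ai (-(D z) / π) z := by
    intro z
    have h := (hD' z).div_const π
    have heq : (fun z => π * Ai z / π) = Ai := by
      funext w
      field_simp
    rwa [heq] at h
  constructor
  · exact fun z => (hAid z).differentiableAt
  · intro z
    have hd := (hAid z).deriv
    have heq : -(π * deriv Ai z) = D z := by
      rw [hd]
      field_simp
    rw [heq]
    exact hD z
end

section
/- The Scorer function Gi(z) = (1/π) · lim_{R→∞} ∫₀^R sin(zy + y³/3) dy is differentiable on ℝ, and its derivative is given by differentiating under the integral sign: for every z ∈ ℝ, Gi'(z) = (1/π) · lim_{R→∞} ∫₀^R y · cos(zy + y³/3) dy, with this limit existing. -/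
open Real Filter MeasureTheory intervalIntegral

open Set Topology in
lemma contPhase (z : ℝ) : Continuous (fun y : ℝ => Real.sin (z * y + y ^ 3 / 3)) := by
  fun_prop

lemma contPhase' (z : ℝ) : Continuous (fun y : ℝ => y * Real.cos (z * y + y ^ 3 / 3)) := by
  fun_prop

lemma hasDerivAt_param (R z : ℝ) :
    HasDerivAt (fun x : ℝ => ∫ y in (0:ℝ)..R, Real.sin (x * y + y ^ 3 / 3))
      (∫ y in (0:ℝ)..R, y * Real.cos (z * y + y ^ 3 / 3)) z := by
  have := (intervalIntegral.hasDerivAt_integral_of_dominated_loc_of_deriv_le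
    (F := fun x t => Real.sin (x * t + t ^ 3 / 3))
    (F' := fun x t => t * Real.cos (x * t + t ^ 3 / 3)) (x₀ := z)
    (a := (0:ℝ)) (b := R) (μ := volume) (bound := fun t => |t|) (s := Set.univ) Filter.univ_mem
    ?_ ?_ ?_ ?_ ?_ ?_).2
  · exact this
  · exact Filter.Eventually.of_forall fun x => (contPhase x).aestronglyMeasurable.restrict
  · exact (contPhase z).intervalIntegrable _ _
  · exact (contPhase' z).aestronglyMeasurable.restrict
  · refine Filter.Eventually.of_forall fun t _ x _ => ?_
    rw [Real.norm_eq_abs, abs_mul]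
    calc |t| * |Real.cos (x * t + t ^ 3 / 3)| ≤ |t| * 1 :=
        mul_le_mul_of_nonneg_left (Real.abs_cos_le_one _) (abs_nonneg t)
      _ = |t| := mul_one _
  · exact continuous_abs.intervalIntegrable _ _
  · refine Filter.Eventually.of_forall fun t _ x _ => ?_
    have h1 : HasDerivAt (fun x : ℝ => x * t + t ^ 3 / 3) t x := by
      simpa using ((hasDerivAt_id x).mul_const t).add_const (t ^ 3 / 3)
    have := (Real.hasDerivAt_sin (x * t + t ^ 3 / 3)).comp x h1
    simpa [mul_comm, Function.comp_def] using this

open Set Topology in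
lemma tail_bound {M a b z : ℝ} (hM : 1 ≤ M) (hz : |z| ≤ M) (ha : 2 * M ≤ a) (hab : a ≤ b) :
    |∫ y in a..b, y * Real.cos (z * y + y ^ 3 / 3)| ≤ 10 / a := by
  have hMpos : (0:ℝ) < M := lt_of_lt_of_le one_pos hM
  have hapos : (0:ℝ) < a := lt_of_lt_of_le (by linarith) ha
  -- key positivity: for y ≥ a, y^2/2 ≤ z + y^2
  have key : ∀ y : ℝ, a ≤ y → y ^ 2 / 2 ≤ z + y ^ 2 := by
    intro y hy
    have hya : (0:ℝ) < y := lt_of_lt_of_le hapos hy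
    have h2 : 2 * M ≤ y := le_trans ha hy
    have : 2 * M ≤ y ^ 2 := by nlinarith
    have : -M ≤ z := by cases abs_le.mp hz; linarith
    nlinarith
  have keypos : ∀ y : ℝ, a ≤ y → 0 < z + y ^ 2 := by
    intro y hy
    have hy0 : (0:ℝ) < y := lt_of_lt_of_le hapos hy
    exact lt_of_lt_of_le (by positivity) (key y hy)
  set u : ℝ → ℝ := fun y => y / (z + y ^ 2) with hu
  set u' : ℝ → ℝ := fun y => (z - y ^ 2) / (z + y ^ 2) ^ 2 with hu'
  set v : ℝ → ℝ := fun y => Real.sin (z * y + y ^ 3 / 3) with hv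
  set v' : ℝ → ℝ := fun y => (z + y ^ 2) * Real.cos (z * y + y ^ 3 / 3) with hv'
  have hIcc : uIcc a b = Icc a b := uIcc_of_le hab
  have hmem : ∀ y ∈ uIcc a b, a ≤ y := by
    intro y hy; rw [hIcc] at hy; exact hy.1
  have hune : ∀ y ∈ uIcc a b, z + y ^ 2 ≠ 0 := fun y hy => (keypos y (hmem y hy)).ne'
  -- derivatives
  have hder_u : ∀ y ∈ uIcc a b, HasDerivAt u (u' y) y := by
    intro y hy
    have hne := hune y hy
    have h1 : HasDerivAt (fun y : ℝ => z + y ^ 2) (2 * y) y := by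
      simpa using (hasDerivAt_pow 2 y).const_add z
    have h2 := (hasDerivAt_id y).div h1 hne
    have heq : (1 * (z + y ^ 2) - id y * (2 * y)) / (z + y ^ 2) ^ 2
        = (z - y ^ 2) / (z + y ^ 2) ^ 2 := by
      simp only [id_eq]; congr 1; ring
    rw [heq] at h2
    exact h2
  have hder_v : ∀ y ∈ uIcc a b, HasDerivAt v (v' y) y := by
    intro y hy
    have h1 : HasDerivAt (fun y : ℝ => z * y + y ^ 3 / 3) (z + y ^ 2) y := by
      have := ((hasDerivAt_pow 3 y).div_const 3).const_add (0:ℝ)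
      have h2 : HasDerivAt (fun y : ℝ => z * y) z y := by
        simpa using (hasDerivAt_id y).const_mul z
      have h3 : HasDerivAt (fun y : ℝ => y ^ 3 / 3) (y ^ 2) y := by
        simpa using (hasDerivAt_pow 3 y).div_const 3
      exact h2.add h3
    simpa [hv, hv', mul_comm, Function.comp_def] using (Real.hasDerivAt_sin (z * y + y ^ 3 / 3)).comp y h1
  -- integrability
  have hcu' : ContinuousOn u' (uIcc a b) := by
    apply ContinuousOn.div
    · fun_prop
    · fun_prop
    · intro y hy; exact pow_ne_zero _ (hune y hy)
  have hcv' : ContinuousOn v' (uIcc a b) := by fun_prop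
  have hcu : ContinuousOn u (uIcc a b) := by
    apply ContinuousOn.div
    · fun_prop
    · fun_prop
    · exact hune
  have hcv : ContinuousOn v (uIcc a b) := by fun_prop
  -- the integrand equals u * v'
  have hcongr : ∫ y in a..b, y * Real.cos (z * y + y ^ 3 / 3) = ∫ y in a..b, u y * v' y := by
    apply intervalIntegral.integral_congr
    intro y hy
    have hne := hune y hy
    simp only [hu, hv']
    field_simp
  have hibp := intervalIntegral.integral_mul_deriv_eq_deriv_mul_of_hasDerivAt hcu hcv
    (fun y hy => hder_u y (Ioo_subset_Icc_self hy))
    (fun y hy => hder_v y (Ioo_subset_Icc_self hy))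
    (hcu'.intervalIntegrable) (hcv'.intervalIntegrable)
  rw [hcongr, hibp]
  -- now estimates
  have habpos : (0:ℝ) < b := lt_of_lt_of_le hapos hab
  have hub : ∀ y : ℝ, a ≤ y → |u y| ≤ 2 / y := by
    intro y hy
    have hypos : (0:ℝ) < y := lt_of_lt_of_le hapos hy
    have h1 := key y hy
    have h2 := keypos y hy
    rw [abs_of_nonneg (div_nonneg hypos.le h2.le)]
    rw [div_le_div_iff₀ h2 hypos]
    nlinarith
  have hu'b : ∀ y : ℝ, a ≤ y → |u' y| ≤ 6 / y ^ 2 := by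
    intro y hy
    have hypos : (0:ℝ) < y := lt_of_lt_of_le hapos hy
    have h1 := key y hy
    have h2 := keypos y hy
    have hy2 : (0:ℝ) < y ^ 2 := by positivity
    have h2M : 2 * M ≤ y := le_trans ha hy
    have hMy : M ≤ y ^ 2 / 2 := by nlinarith
    have hz' := abs_le.mp hz
    have hzy : |z - y ^ 2| ≤ 3 / 2 * y ^ 2 := by
      rw [abs_sub_comm, abs_of_nonneg (by linarith)]
      linarith
    have hsq : (y ^ 2 / 2) * (y ^ 2 / 2) ≤ (z + y ^ 2) * (z + y ^ 2) :=
      mul_le_mul h1 h1 (by positivity) h2.le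
    rw [hu', abs_div, abs_of_nonneg (by positivity : (0:ℝ) ≤ (z + y ^ 2) ^ 2)]
    rw [div_le_div_iff₀ (by positivity) hy2]
    calc |z - y ^ 2| * y ^ 2 ≤ (3 / 2 * y ^ 2) * y ^ 2 :=
        mul_le_mul_of_nonneg_right hzy hy2.le
      _ ≤ 6 * (z + y ^ 2) ^ 2 := by nlinarith
  have hvb : ∀ y : ℝ, |v y| ≤ 1 := fun y => Real.abs_sin_le_one _
  -- bound on the remaining integral
  have hint : |∫ y in a..b, u' y * v y| ≤ 6 / a := by
    have hle : |∫ y in a..b, u' y * v y| ≤ |∫ y in a..b, 6 / y ^ 2| := by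
      rw [← Real.norm_eq_abs]
      apply intervalIntegral.norm_integral_le_abs_of_norm_le (g := fun y => 6 / y ^ 2)
      · refine (ae_restrict_iff' measurableSet_uIoc).mpr (Filter.Eventually.of_forall ?_)
        intro y hy
        rw [uIoc_of_le hab] at hy
        have hay : a ≤ y := hy.1.le
        rw [Real.norm_eq_abs, abs_mul]
        calc |u' y| * |v y| ≤ (6 / y ^ 2) * 1 :=
            mul_le_mul (hu'b y hay) (hvb y) (abs_nonneg _) (by positivity)
          _ = 6 / y ^ 2 := mul_one _
      · apply ContinuousOn.intervalIntegrable
        apply ContinuousOn.div continuousOn_const (by fun_prop)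
        intro y hy
        have h0 : (0:ℝ) < y := lt_of_lt_of_le hapos (hmem y hy)
        positivity
    have heval : ∫ y in a..b, 6 / y ^ 2 = 6 / a - 6 / b := by
      have hder : ∀ y ∈ uIcc a b, HasDerivAt (fun y : ℝ => -(6 / y)) (6 / y ^ 2) y := by
        intro y hy
        have hyne : y ≠ 0 := (lt_of_lt_of_le hapos (hmem y hy)).ne'
        have := ((hasDerivAt_inv hyne).const_mul (6:ℝ)).neg
        simpa [div_eq_mul_inv, neg_neg, mul_neg, Pi.neg_def] using this
      have hint2 : IntervalIntegrable (fun y : ℝ => 6 / y ^ 2) volume a b := by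
        apply ContinuousOn.intervalIntegrable
        apply ContinuousOn.div continuousOn_const (by fun_prop)
        intro y hy
        have h0 := lt_of_lt_of_le hapos (hmem y hy)
        positivity
      rw [intervalIntegral.integral_eq_sub_of_hasDerivAt hder hint2]
      ring
    have hb6 : 0 ≤ 6 / b := by positivity
    have hba : 6 / b ≤ 6 / a := div_le_div_of_nonneg_left (by norm_num) hapos hab
    calc |∫ y in a..b, u' y * v y| ≤ |∫ y in a..b, 6 / y ^ 2| := hle
      _ = 6 / a - 6 / b := by rw [heval]; exact abs_of_nonneg (by linarith)
      _ ≤ 6 / a := by linarith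
  calc |u b * v b - u a * v a - ∫ y in a..b, u' y * v y|
      ≤ |u b * v b - u a * v a| + |∫ y in a..b, u' y * v y| := abs_sub _ _
    _ ≤ (|u b| * |v b| + |u a| * |v a|) + 6 / a := by
        refine add_le_add ?_ hint
        calc |u b * v b - u a * v a| ≤ |u b * v b| + |u a * v a| := abs_sub _ _
          _ = |u b| * |v b| + |u a| * |v a| := by rw [abs_mul, abs_mul]
    _ ≤ (2 / a * 1 + 2 / a * 1) + 6 / a := by
        refine add_le_add (add_le_add ?_ ?_) le_rfl
        · refine mul_le_mul (le_trans (hub b hab) ?_) (hvb b) (abs_nonneg _) (by positivity)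
          exact div_le_div_of_nonneg_left (by norm_num) hapos hab
        · exact mul_le_mul (hub a le_rfl) (hvb a) (abs_nonneg _) (by positivity)
    _ = 10 / a := by ring

open Set Topology in
lemma ucauchy {M : ℝ} (hM : 1 ≤ M) :
    UniformCauchySeqOn (fun R z => ∫ y in (0:ℝ)..R, y * Real.cos (z * y + y ^ 3 / 3))
      atTop (Metric.ball (0:ℝ) M) := by
  rw [Metric.uniformCauchySeqOn_iff]
  intro ε hε
  refine ⟨max (2 * M) (20 / ε), fun m hm n hn x hx => ?_⟩
  set N := max (2 * M) (20 / ε) with hN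
  have hNε : 20 / ε ≤ N := le_max_right _ _
  have hNM : 2 * M ≤ N := le_max_left _ _
  have hNpos : 0 < N := lt_of_lt_of_le (by positivity) hNε
  have hxM : |x| ≤ M := by
    have := mem_ball_iff_norm.mp hx
    simp only [sub_zero, Real.norm_eq_abs] at this
    exact this.le
  have hsub : (∫ y in (0:ℝ)..m, y * Real.cos (x * y + y ^ 3 / 3))
      - ∫ y in (0:ℝ)..n, y * Real.cos (x * y + y ^ 3 / 3)
      = ∫ y in n..m, y * Real.cos (x * y + y ^ 3 / 3) :=
    integral_interval_sub_left ((contPhase' x).intervalIntegrable _ _)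
      ((contPhase' x).intervalIntegrable _ _)
  rw [Real.dist_eq, hsub]
  have hbound : |∫ y in n..m, y * Real.cos (x * y + y ^ 3 / 3)| ≤ 10 / min m n := by
    rcases le_total n m with h | h
    · have : min m n = n := min_eq_right h
      rw [this]
      exact tail_bound hM hxM (le_trans hNM hn) h
    · have : min m n = m := min_eq_left h
      rw [this, intervalIntegral.integral_symm, abs_neg]
      exact tail_bound hM hxM (le_trans hNM hm) h
  have hmn : N ≤ min m n := le_min hm hn
  have hminpos : 0 < min m n := lt_of_lt_of_le hNpos hmn
  calc |∫ y in n..m, y * Real.cos (x * y + y ^ 3 / 3)| ≤ 10 / min m n := hbound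
    _ ≤ 10 / N := div_le_div_of_nonneg_left (by norm_num) hNpos hmn
    _ ≤ 10 / (20 / ε) := div_le_div_of_nonneg_left (by norm_num) (by positivity) hNε
    _ = ε / 2 := by field_simp; ring
    _ < ε := by linarith

open Set Topology in
lemma exists_lim (z : ℝ) :
    ∃ L, Tendsto (fun R => ∫ y in (0:ℝ)..R, y * Real.cos (z * y + y ^ 3 / 3)) atTop (𝓝 L) := by
  apply cauchy_map_iff_exists_tendsto.mp
  have hM : (1:ℝ) ≤ |z| + 1 := by linarith [abs_nonneg z]
  have hz : z ∈ Metric.ball (0:ℝ) (|z| + 1) := by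
    simp only [Metric.mem_ball, Real.dist_eq, sub_zero]
    linarith
  have hc := ucauchy hM
  rw [cauchy_map_iff]
  refine ⟨inferInstance, ?_⟩
  rw [Filter.tendsto_def]
  intro u hu
  filter_upwards [hc u hu] with p hp using hp z hz

open Set Topology in
/-- The Scorer function `Gi` (defined by the improper oscillatory integral
`Gi z = (1/π) lim_{R→∞} ∫₀^R sin (z y + y³/3) dy`) is differentiable on `ℝ`, and its
derivative is obtained by differentiating under the integral sign: for every `z`,
`Gi'(z) = (1/π) lim_{R→∞} ∫₀^R y cos (z y + y³/3) dy`, the limit existing (i.e. the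
partial integrals tend to `π * Gi'(z)`). -/
theorem scorer_differentiable_deriv_integral
    (Gi : ℝ → ℝ)
    (hGi : ∀ z : ℝ, Tendsto (fun R : ℝ => ∫ y in (0:ℝ)..R, Real.sin (z * y + y ^ 3 / 3))
      atTop (nhds (π * Gi z))) :
    Differentiable ℝ Gi ∧
      ∀ z : ℝ, Tendsto (fun R : ℝ => ∫ y in (0:ℝ)..R, y * Real.cos (z * y + y ^ 3 / 3))
        atTop (nhds (π * deriv Gi z)) := by
  choose g' hg' using exists_lim
  have key : ∀ z₀ : ℝ, HasDerivAt (fun z => π * Gi z) (g' z₀) z₀ := by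
    intro z₀
    have hM : (1:ℝ) ≤ |z₀| + 1 := by linarith [abs_nonneg z₀]
    have hball : z₀ ∈ Metric.ball (0:ℝ) (|z₀| + 1) := by
      simp only [Metric.mem_ball, Real.dist_eq, sub_zero]
      linarith
    refine hasDerivAt_of_tendstoUniformlyOn (l := (atTop : Filter ℝ))
      (f := fun R z => ∫ y in (0:ℝ)..R, Real.sin (z * y + y ^ 3 / 3))
      (f' := fun R z => ∫ y in (0:ℝ)..R, y * Real.cos (z * y + y ^ 3 / 3))
      Metric.isOpen_ball ?_ ?_ ?_ hball
    · exact (ucauchy hM).tendstoUniformlyOn_of_tendsto (fun x _ => hg' x)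
    · exact Filter.Eventually.of_forall fun R x _ => hasDerivAt_param R x
    · exact fun x _ => hGi x
  have hGd : ∀ z₀ : ℝ, HasDerivAt Gi (g' z₀ / π) z₀ := by
    intro z₀
    have h := (key z₀).div_const π
    have heq : (fun z => π * Gi z / π) = Gi :=
      funext fun z => mul_div_cancel_left₀ _ Real.pi_ne_zero
    rwa [heq] at h
  refine ⟨fun z => (hGd z).differentiableAt, fun z => ?_⟩
  have h2 : π * deriv Gi z = g' z := by
    rw [(hGd z).deriv]
    field_simp
  rw [h2]
  exact hg' z
end
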